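/- arXiv:0806.2768 — 3 statements merged into one kernel-verified Lean document; each statement's English description precedes it below -/
import Mathlib

section
/- There is an absolute constant M with the following property. Let N ≥ 1, let 0 < ε ≤ 1, and let s₁ and s₂ be independent random vectors, each of the form s = N^{−1/2}(v₁,…,v_N)ᵀ with v₁,…,v_N i.i.d. complex random variables satisfying E v₁ = 0, E|v₁|² = 1, |v₁| ≤ ε√N almost surely, and E|v₁|⁴ ≤ C. Then E |s₁* s₂|⁸ ≤ M (1 + C²) / N³. -/
open MeasureTheory ProbabilityTheory Filter Matrix Finset
open scoped BigOperators Topology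

noncomputable section

/-- The normalized signature vector `s_k = N^{-1/2}(v_{1k},…,v_{Nk})ᵀ`. -/
def sVec {Ω : Type*} (v : ℕ → ℕ → Ω → ℂ) (N k : ℕ) (ω : Ω) : Fin N → ℂ :=
  fun i => v i k ω / ((Real.sqrt N : ℝ) : ℂ)

set_option maxHeartbeats 1000000

section AuxLemmas

lemma pw_s2 (x y r : ℝ) (hr : r^2 ≤ x*y) :
    (2*r + y)^2 ≤ 6*x*y + 3*y^2 := by nlinarith [sq_nonneg (r - y)]

lemma pw_rb (x y r : ℝ) (hx : 0 ≤ x) (hy : 0 ≤ y) (hr : r^2 ≤ x*y) :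
    2*r ≤ x + y := by nlinarith [sq_nonneg (x - y), sq_nonneg (x + y - 2*r)]

lemma pw_s3 (x y r : ℝ) (hx : 0 ≤ x) (hy : 0 ≤ y) (hr : r^2 ≤ x*y) :
    (2*r + y)^3 ≤ 6*x^2*y + 15*x*y^2 + 6*y^3 := by
  rcases le_or_gt (2*r + y) 0 with h | h
  · have h3 : (2*r + y)^3 ≤ 0 := by nlinarith [sq_nonneg (2*r + y)]
    nlinarith [mul_nonneg (mul_nonneg hx hx) hy, mul_nonneg (mul_nonneg hx hy) hy,
      mul_nonneg (mul_nonneg hy hy) hy]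
  · have hle : 2*r + y ≤ x + 2*y := by linarith [pw_rb x y r hx hy hr]
    have hs2 := pw_s2 x y r hr
    calc (2*r + y)^3 = (2*r + y) * (2*r + y)^2 := by ring
      _ ≤ (x + 2*y) * (6*x*y + 3*y^2) := by
          apply mul_le_mul hle hs2 (sq_nonneg _) (by linarith)
      _ = 6*x^2*y + 15*x*y^2 + 6*y^3 := by ring

lemma pw2 (x y r : ℝ) (hx : 0 ≤ x) (hy : 0 ≤ y) (hr : r^2 ≤ x*y) :
    (x + (2*r + y))^2 ≤ x^2 + 4*x*r + 8*x*y + 3*y^2 := by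
  nlinarith [pw_s2 x y r hr, mul_nonneg hx hy]

lemma pw3 (x y r : ℝ) (hx : 0 ≤ x) (hy : 0 ≤ y) (hr : r^2 ≤ x*y) :
    (x + (2*r + y))^3 ≤ x^3 + 6*x^2*r + 27*x^2*y + 24*x*y^2 + 6*y^3 := by
  nlinarith [pw_s3 x y r hx hy hr,
    mul_le_mul_of_nonneg_left (pw_s2 x y r hr) (by positivity : (0:ℝ) ≤ 3*x)]

lemma pw4 (x y r : ℝ) (hx : 0 ≤ x) (hy : 0 ≤ y) (hr : r^2 ≤ x*y) :
    (x + (2*r + y))^4 ≤ x^4 + 8*x^3*r + 64*x^3*y + 114*x^2*y^2 + 60*x*y^3 + 9*y^4 := by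
  have hs2 := pw_s2 x y r hr
  have hs4 : (2*r + y)^4 ≤ (6*x*y + 3*y^2)^2 := by
    have h0 : (0:ℝ) ≤ (2*r+y)^2 := sq_nonneg _
    nlinarith [mul_self_le_mul_self h0 hs2]
  nlinarith [hs4, mul_le_mul_of_nonneg_left (pw_s3 x y r hx hy hr) (by positivity : (0:ℝ) ≤ 4*x),
    mul_le_mul_of_nonneg_left hs2 (by positivity : (0:ℝ) ≤ 6*x^2)]

lemma normsq_add_expand (S a : ℂ) :
    ‖S + a‖^2 = ‖S‖^2 + (2*(S.re*a.re + S.im*a.im) + ‖a‖^2) := by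
  have h : ∀ z : ℂ, ‖z‖^2 = z.re^2 + z.im^2 := by
    intro z
    rw [Complex.sq_norm, Complex.normSq_apply]; ring
  simp only [h, Complex.add_re, Complex.add_im]; ring

lemma cs_re_im (S a : ℂ) : (S.re*a.re + S.im*a.im)^2 ≤ ‖S‖^2 * ‖a‖^2 := by
  have h : ∀ z : ℂ, ‖z‖^2 = z.re^2 + z.im^2 := by
    intro z
    rw [Complex.sq_norm, Complex.normSq_apply]; ring
  rw [h, h]
  nlinarith [sq_nonneg (S.re*a.im - S.im*a.re)]

variable {Ω : Type} [MeasurableSpace Ω] (P : Measure Ω) [IsProbabilityMeasure P]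

lemma int_of_bound {f : Ω → ℝ} (hf : Measurable f) (B : ℝ)
    (hb : ∀ᵐ ω ∂P, |f ω| ≤ B) : Integrable f P :=
  (integrable_const B).mono' hf.aestronglyMeasurable
    (by filter_upwards [hb] with ω h using by simpa [Real.norm_eq_abs] using h)

lemma indep_T_Y {P : Measure Ω}
    (v : ℕ → ℕ → Ω → ℂ) (hmeas : ∀ i j, Measurable (v i j))
    (hind : iIndepFun
      (fun q : ℕ × ℕ => v q.1 q.2) P) (k : ℕ) :
    IndepFun (fun ω => ∑ i ∈ Finset.range k, (starRingEnd ℂ) (v i 0 ω) * v i 1 ω)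
      (fun ω => (starRingEnd ℂ) (v k 0 ω) * v k 1 ω) P := by
  classical
  set S : Finset (ℕ × ℕ) := (Finset.range k) ×ˢ ({0, 1} : Finset ℕ) with hS
  set Tset : Finset (ℕ × ℕ) := {(k, 0), (k, 1)} with hT
  have hdisj : Disjoint S Tset := by
    rw [Finset.disjoint_left]
    intro a haS haT
    have h1 : a.1 < k := by
      rw [hS, Finset.mem_product] at haS
      simpa using haS.1
    have h2 : a.1 = k := by
      rw [hT] at haT
      simp only [Finset.mem_insert, Finset.mem_singleton] at haT
      rcases haT with h | h <;> simp [h]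
    omega
  have base := hind.indepFun_finset S Tset hdisj (fun q => hmeas q.1 q.2)
  have hmem0 : ∀ i ∈ Finset.range k, ((i, 0) : ℕ × ℕ) ∈ S := by
    intro i hi; rw [hS, Finset.mem_product]; simp [hi]
  have hmem1 : ∀ i ∈ Finset.range k, ((i, 1) : ℕ × ℕ) ∈ S := by
    intro i hi; rw [hS, Finset.mem_product]; simp [hi]
  set φ : ((i : S) → ℂ) → ℂ := fun x =>
    ∑ i ∈ (Finset.range k).attach,
      (starRingEnd ℂ) (x ⟨(i.1, 0), hmem0 i.1 i.2⟩) * x ⟨(i.1, 1), hmem1 i.1 i.2⟩ with hφ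
  set ψ : ((i : Tset) → ℂ) → ℂ := fun x =>
    (starRingEnd ℂ) (x ⟨(k, 0), by simp [hT]⟩) * x ⟨(k, 1), by simp [hT]⟩ with hψ
  have hφm : Measurable φ := by
    apply Finset.measurable_sum
    intro i _
    exact ((Complex.continuous_conj.measurable).comp (measurable_pi_apply _)).mul
      (measurable_pi_apply _)
  have hψm : Measurable ψ := by
    exact ((Complex.continuous_conj.measurable).comp (measurable_pi_apply _)).mul
      (measurable_pi_apply _)
  have final := base.comp hφm hψm
  have e1 : (φ ∘ fun a (i : S) => v (i : ℕ × ℕ).1 (i : ℕ × ℕ).2 a)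
      = fun ω => ∑ i ∈ Finset.range k, (starRingEnd ℂ) (v i 0 ω) * v i 1 ω := by
    funext ω
    simp only [Function.comp_apply, hφ]
    rw [← Finset.sum_attach (Finset.range k)
      (fun i => (starRingEnd ℂ) (v i 0 ω) * v i 1 ω)]
  have e2 : (ψ ∘ fun a (i : Tset) => v (i : ℕ × ℕ).1 (i : ℕ × ℕ).2 a)
      = fun ω => (starRingEnd ℂ) (v k 0 ω) * v k 1 ω := by
    funext ω; simp [hψ]
  rwa [e1, e2] at final

lemma ident_ae_norm_le {P : Measure Ω} {f g : Ω → ℂ} (h : IdentDistrib f g P P)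
    {c : ℝ} (hb : ∀ᵐ ω ∂P, ‖g ω‖ ≤ c) : ∀ᵐ ω ∂P, ‖f ω‖ ≤ c := by
  have hA : MeasurableSet {z : ℂ | c < ‖z‖} :=
    measurableSet_lt measurable_const measurable_norm
  rw [ae_iff] at hb ⊢
  have := h.measure_mem_eq hA
  simp only [not_le]
  simp only [not_le] at hb
  calc P {ω | c < ‖f ω‖} = P (f ⁻¹' {z | c < ‖z‖}) := rfl
    _ = P (g ⁻¹' {z | c < ‖z‖}) := this
    _ = 0 := hb


lemma key_step (T Y : Ω → ℂ) (hT : Measurable T) (hY : Measurable Y)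
    (hind : IndepFun T Y P) (BT BY : ℝ) (hBT : 0 ≤ BT) (hBY : 0 ≤ BY)
    (hbT : ∀ᵐ ω ∂P, ‖T ω‖ ≤ BT) (hbY : ∀ᵐ ω ∂P, ‖Y ω‖ ≤ BY)
    (hYre : ∫ ω, (Y ω).re ∂P = 0) (hYim : ∫ ω, (Y ω).im ∂P = 0) :
    (∫ ω, ‖T ω + Y ω‖^2 ∂P = ∫ ω, ‖T ω‖^2 ∂P + ∫ ω, ‖Y ω‖^2 ∂P) ∧
    (∫ ω, ‖T ω + Y ω‖^4 ∂P ≤ ∫ ω, ‖T ω‖^4 ∂P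
        + 8*(∫ ω, ‖T ω‖^2 ∂P)*(∫ ω, ‖Y ω‖^2 ∂P) + 3*∫ ω, ‖Y ω‖^4 ∂P) ∧
    (∫ ω, ‖T ω + Y ω‖^6 ∂P ≤ ∫ ω, ‖T ω‖^6 ∂P
        + 27*(∫ ω, ‖T ω‖^4 ∂P)*(∫ ω, ‖Y ω‖^2 ∂P)
        + 24*(∫ ω, ‖T ω‖^2 ∂P)*(∫ ω, ‖Y ω‖^4 ∂P) + 6*∫ ω, ‖Y ω‖^6 ∂P) ∧
    (∫ ω, ‖T ω + Y ω‖^8 ∂P ≤ ∫ ω, ‖T ω‖^8 ∂P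
        + 64*(∫ ω, ‖T ω‖^6 ∂P)*(∫ ω, ‖Y ω‖^2 ∂P)
        + 114*(∫ ω, ‖T ω‖^4 ∂P)*(∫ ω, ‖Y ω‖^4 ∂P)
        + 60*(∫ ω, ‖T ω‖^2 ∂P)*(∫ ω, ‖Y ω‖^6 ∂P) + 9*∫ ω, ‖Y ω‖^8 ∂P) := by
  -- measurability of basic pieces
  have hTn : ∀ a : ℕ, Measurable fun ω => ‖T ω‖^a := fun a => (hT.norm).pow_const a
  have hYn : ∀ a : ℕ, Measurable fun ω => ‖Y ω‖^a := fun a => (hY.norm).pow_const a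
  -- integrability of powers
  have hXint : ∀ a : ℕ, Integrable (fun ω => ‖T ω‖^a) P := by
    intro a
    refine int_of_bound P (hTn a) (BT^a) ?_
    filter_upwards [hbT] with ω h
    rw [abs_of_nonneg (by positivity)]
    exact pow_le_pow_left₀ (norm_nonneg _) h a
  have hYint : ∀ a : ℕ, Integrable (fun ω => ‖Y ω‖^a) P := by
    intro a
    refine int_of_bound P (hYn a) (BY^a) ?_
    filter_upwards [hbY] with ω h
    rw [abs_of_nonneg (by positivity)]
    exact pow_le_pow_left₀ (norm_nonneg _) h a
  have hXYint : ∀ a b : ℕ, Integrable (fun ω => ‖T ω‖^a * ‖Y ω‖^b) P := by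
    intro a b
    refine int_of_bound P ((hTn a).mul (hYn b)) (BT^a * BY^b) ?_
    filter_upwards [hbT, hbY] with ω h1 h2
    rw [abs_of_nonneg (by positivity)]
    exact mul_le_mul (pow_le_pow_left₀ (norm_nonneg _) h1 a)
      (pow_le_pow_left₀ (norm_nonneg _) h2 b) (by positivity) (by positivity)
  -- factorization
  have hfac : ∀ a b : ℕ, ∫ ω, ‖T ω‖^a * ‖Y ω‖^b ∂P
      = (∫ ω, ‖T ω‖^a ∂P) * (∫ ω, ‖Y ω‖^b ∂P) := by
    intro a b
    have h1 : IndepFun (fun ω => ‖T ω‖^a) (fun ω => ‖Y ω‖^b) P :=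
      hind.comp (measurable_norm.pow_const a) (measurable_norm.pow_const b)
    exact h1.integral_fun_mul_eq_mul_integral (hXint a).aestronglyMeasurable (hYint b).aestronglyMeasurable
  -- cross term vanishes
  have hzero : ∀ a : ℕ,
      ∫ ω, ‖T ω‖^a * ((T ω).re*(Y ω).re + (T ω).im*(Y ω).im) ∂P = 0 := by
    intro a
    have e1 : ∀ ω, ‖T ω‖^a * ((T ω).re*(Y ω).re + (T ω).im*(Y ω).im)
        = (‖T ω‖^a * (T ω).re) * (Y ω).re + (‖T ω‖^a * (T ω).im) * (Y ω).im := by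
      intro ω; ring
    have m1 : Measurable fun z : ℂ => ‖z‖^a * z.re :=
      (measurable_norm.pow_const a).mul Complex.measurable_re
    have m2 : Measurable fun z : ℂ => ‖z‖^a * z.im :=
      (measurable_norm.pow_const a).mul Complex.measurable_im
    have iT1 : Integrable (fun ω => ‖T ω‖^a * (T ω).re) P := by
      refine int_of_bound P (m1.comp hT) (BT^a * BT) ?_
      filter_upwards [hbT] with ω h
      calc |‖T ω‖^a * (T ω).re| = ‖T ω‖^a * |(T ω).re| := by
            rw [abs_mul, abs_of_nonneg (by positivity)]
        _ ≤ BT^a * BT := by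
            refine mul_le_mul (pow_le_pow_left₀ (norm_nonneg _) h a)
              (le_trans (Complex.abs_re_le_norm _) h) (abs_nonneg _) (by positivity)
    have iT2 : Integrable (fun ω => ‖T ω‖^a * (T ω).im) P := by
      refine int_of_bound P (m2.comp hT) (BT^a * BT) ?_
      filter_upwards [hbT] with ω h
      calc |‖T ω‖^a * (T ω).im| = ‖T ω‖^a * |(T ω).im| := by
            rw [abs_mul, abs_of_nonneg (by positivity)]
        _ ≤ BT^a * BT := by
            refine mul_le_mul (pow_le_pow_left₀ (norm_nonneg _) h a)
              (le_trans (Complex.abs_im_le_norm _) h) (abs_nonneg _) (by positivity)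
    have iY1 : Integrable (fun ω => (Y ω).re) P := by
      refine int_of_bound P (Complex.measurable_re.comp hY) BY ?_
      filter_upwards [hbY] with ω h
      exact le_trans (Complex.abs_re_le_norm _) h
    have iY2 : Integrable (fun ω => (Y ω).im) P := by
      refine int_of_bound P (Complex.measurable_im.comp hY) BY ?_
      filter_upwards [hbY] with ω h
      exact le_trans (Complex.abs_im_le_norm _) h
    have f1 : ∫ ω, (‖T ω‖^a * (T ω).re) * (Y ω).re ∂P
        = (∫ ω, ‖T ω‖^a * (T ω).re ∂P) * ∫ ω, (Y ω).re ∂P :=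
      (hind.comp m1 Complex.measurable_re).integral_fun_mul_eq_mul_integral iT1.aestronglyMeasurable iY1.aestronglyMeasurable
    have f2 : ∫ ω, (‖T ω‖^a * (T ω).im) * (Y ω).im ∂P
        = (∫ ω, ‖T ω‖^a * (T ω).im ∂P) * ∫ ω, (Y ω).im ∂P :=
      (hind.comp m2 Complex.measurable_im).integral_fun_mul_eq_mul_integral iT2.aestronglyMeasurable iY2.aestronglyMeasurable
    have iP1 : Integrable (fun ω => (‖T ω‖^a * (T ω).re) * (Y ω).re) P := by
      refine int_of_bound P (((m1.comp hT)).mul (Complex.measurable_re.comp hY))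
        ((BT^a * BT) * BY) ?_
      filter_upwards [hbT, hbY] with ω h1 h2
      rw [abs_mul, abs_mul]
      refine mul_le_mul (mul_le_mul ?_ ?_ (abs_nonneg _) (by positivity)) ?_ (abs_nonneg _)
        (by positivity)
      · rw [abs_of_nonneg (by positivity)]
        exact pow_le_pow_left₀ (norm_nonneg _) h1 a
      · exact le_trans (Complex.abs_re_le_norm _) h1
      · exact le_trans (Complex.abs_re_le_norm _) h2
    have iP2 : Integrable (fun ω => (‖T ω‖^a * (T ω).im) * (Y ω).im) P := by
      refine int_of_bound P (((m2.comp hT)).mul (Complex.measurable_im.comp hY))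
        ((BT^a * BT) * BY) ?_
      filter_upwards [hbT, hbY] with ω h1 h2
      rw [abs_mul, abs_mul]
      refine mul_le_mul (mul_le_mul ?_ ?_ (abs_nonneg _) (by positivity)) ?_ (abs_nonneg _)
        (by positivity)
      · rw [abs_of_nonneg (by positivity)]
        exact pow_le_pow_left₀ (norm_nonneg _) h1 a
      · exact le_trans (Complex.abs_im_le_norm _) h1
      · exact le_trans (Complex.abs_im_le_norm _) h2
    simp only [e1]
    rw [integral_add iP1 iP2, f1, f2, hYre, hYim]
    ring
  -- abbreviations
  set R : Ω → ℝ := fun ω => (T ω).re*(Y ω).re + (T ω).im*(Y ω).im with hR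
  have mR : Measurable R :=
    ((Complex.measurable_re.comp hT).mul (Complex.measurable_re.comp hY)).add
      ((Complex.measurable_im.comp hT).mul (Complex.measurable_im.comp hY))
  have hRb : ∀ ω, |R ω| ≤ ‖T ω‖ * ‖Y ω‖ := by
    intro ω
    have h1 := cs_re_im (T ω) (Y ω)
    have h2 : (0:ℝ) ≤ ‖T ω‖ * ‖Y ω‖ := by positivity
    refine abs_le_of_sq_le_sq ?_ h2
    calc (R ω)^2 ≤ ‖T ω‖^2 * ‖Y ω‖^2 := h1
      _ = (‖T ω‖ * ‖Y ω‖)^2 := by ring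
  have hXRint : ∀ a : ℕ, Integrable (fun ω => ‖T ω‖^a * R ω) P := by
    intro a
    refine int_of_bound P ((hTn a).mul mR) (BT^a * (BT*BY)) ?_
    filter_upwards [hbT, hbY] with ω h1 h2
    rw [abs_mul, abs_of_nonneg (pow_nonneg (norm_nonneg _) a)]
    refine mul_le_mul (pow_le_pow_left₀ (norm_nonneg _) h1 a)
      (le_trans (hRb ω) ?_) (abs_nonneg _) (by positivity)
    exact mul_le_mul h1 h2 (norm_nonneg _) hBT
  have hTYint : ∀ a : ℕ, Integrable (fun ω => ‖T ω + Y ω‖^a) P := by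
    intro a
    refine int_of_bound P (((hT.add hY).norm).pow_const a) ((BT+BY)^a) ?_
    filter_upwards [hbT, hbY] with ω h1 h2
    rw [abs_of_nonneg (by positivity)]
    exact pow_le_pow_left₀ (norm_nonneg _) (le_trans (norm_add_le _ _) (add_le_add h1 h2)) a
  have hx : ∀ ω, (0:ℝ) ≤ ‖T ω‖^2 := fun ω => by positivity
  have hy : ∀ ω, (0:ℝ) ≤ ‖Y ω‖^2 := fun ω => by positivity
  have hrxy : ∀ ω, (R ω)^2 ≤ ‖T ω‖^2 * ‖Y ω‖^2 := fun ω => cs_re_im (T ω) (Y ω)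
  have hexp : ∀ (p : ℕ) (ω : Ω),
      ‖T ω + Y ω‖^(2*p) = (‖T ω‖^2 + (2*R ω + ‖Y ω‖^2))^p := by
    intro p ω
    rw [pow_mul, normsq_add_expand]
  have iadd : ∀ {f g : Ω → ℝ}, Integrable f P → Integrable g P →
      Integrable (fun ω => f ω + g ω) P := by
    intro f g hf hg; exact hf.add hg
  have icmul : ∀ (c : ℝ) {f : Ω → ℝ}, Integrable f P →
      Integrable (fun ω => c * f ω) P := by
    intro c f hf; exact hf.const_mul c
  refine ⟨?_, ?_, ?_, ?_⟩
  -- p = 1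
  · have e1 : (fun ω => ‖T ω + Y ω‖^2)
        = fun ω => ‖T ω‖^2 + (2 * (‖T ω‖^0 * R ω) + ‖Y ω‖^2) := by
      funext ω
      simpa using hexp 1 ω
    rw [e1, integral_add (hXint 2) (iadd (icmul 2 (hXRint 0)) (hYint 2)),
      integral_add (icmul 2 (hXRint 0)) (hYint 2), integral_const_mul 2 _, hzero 0]
    ring
  -- p = 2
  · have e2 : (fun ω => ‖T ω + Y ω‖^4)
        = fun ω => (‖T ω‖^2 + (2*R ω + ‖Y ω‖^2))^2 := funext fun ω => hexp 2 ω
    have hInt : Integrable (fun ω =>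
        ‖T ω‖^4 + (4*(‖T ω‖^2*R ω) + (8*(‖T ω‖^2*‖Y ω‖^2) + 3*(‖Y ω‖^4)))) P :=
      iadd (hXint 4) (iadd (icmul 4 (hXRint 2))
        (iadd (icmul 8 (hXYint 2 2)) (icmul 3 (hYint 4))))
    have hmono : ∫ ω, (‖T ω‖^2 + (2*R ω + ‖Y ω‖^2))^2 ∂P
        ≤ ∫ ω, ‖T ω‖^4 + (4*(‖T ω‖^2*R ω) + (8*(‖T ω‖^2*‖Y ω‖^2) + 3*(‖Y ω‖^4))) ∂P := by
      refine integral_mono_ae ((hTYint 4).congr ?_) hInt (ae_of_all _ ?_)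
      · filter_upwards with ω using (hexp 2 ω)
      · intro ω
        dsimp only
        nlinarith [pw2 (‖T ω‖^2) (‖Y ω‖^2) (R ω) (hx ω) (hy ω) (hrxy ω)]
    rw [e2]
    refine le_trans hmono ?_
    rw [integral_add (hXint 4) (iadd (icmul 4 (hXRint 2))
        (iadd (icmul 8 (hXYint 2 2)) (icmul 3 (hYint 4)))),
      integral_add (icmul 4 (hXRint 2)) (iadd (icmul 8 (hXYint 2 2)) (icmul 3 (hYint 4))),
      integral_add (icmul 8 (hXYint 2 2)) (icmul 3 (hYint 4)),
      integral_const_mul, integral_const_mul, integral_const_mul, hzero 2, hfac 2 2]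
    ring_nf
    exact le_refl _
  -- p = 3
  · have e3 : (fun ω => ‖T ω + Y ω‖^6)
        = fun ω => (‖T ω‖^2 + (2*R ω + ‖Y ω‖^2))^3 := funext fun ω => hexp 3 ω
    have hInt : Integrable (fun ω =>
        ‖T ω‖^6 + (6*(‖T ω‖^4*R ω) + (27*(‖T ω‖^4*‖Y ω‖^2)
          + (24*(‖T ω‖^2*‖Y ω‖^4) + 6*(‖Y ω‖^6))))) P :=
      iadd (hXint 6) (iadd (icmul 6 (hXRint 4)) (iadd (icmul 27 (hXYint 4 2))
        (iadd (icmul 24 (hXYint 2 4)) (icmul 6 (hYint 6)))))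
    have hmono : ∫ ω, (‖T ω‖^2 + (2*R ω + ‖Y ω‖^2))^3 ∂P
        ≤ ∫ ω, ‖T ω‖^6 + (6*(‖T ω‖^4*R ω) + (27*(‖T ω‖^4*‖Y ω‖^2)
          + (24*(‖T ω‖^2*‖Y ω‖^4) + 6*(‖Y ω‖^6)))) ∂P := by
      refine integral_mono_ae ((hTYint 6).congr ?_) hInt (ae_of_all _ ?_)
      · filter_upwards with ω using (hexp 3 ω)
      · intro ω
        dsimp only
        nlinarith [pw3 (‖T ω‖^2) (‖Y ω‖^2) (R ω) (hx ω) (hy ω) (hrxy ω)]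
    rw [e3]
    refine le_trans hmono ?_
    rw [integral_add (hXint 6) (iadd (icmul 6 (hXRint 4)) (iadd (icmul 27 (hXYint 4 2))
        (iadd (icmul 24 (hXYint 2 4)) (icmul 6 (hYint 6))))),
      integral_add (icmul 6 (hXRint 4)) (iadd (icmul 27 (hXYint 4 2))
        (iadd (icmul 24 (hXYint 2 4)) (icmul 6 (hYint 6)))),
      integral_add (icmul 27 (hXYint 4 2)) (iadd (icmul 24 (hXYint 2 4)) (icmul 6 (hYint 6))),
      integral_add (icmul 24 (hXYint 2 4)) (icmul 6 (hYint 6)),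
      integral_const_mul, integral_const_mul, integral_const_mul, integral_const_mul,
      hzero 4, hfac 4 2, hfac 2 4]
    ring_nf
    exact le_refl _
  -- p = 4
  · have e4 : (fun ω => ‖T ω + Y ω‖^8)
        = fun ω => (‖T ω‖^2 + (2*R ω + ‖Y ω‖^2))^4 := funext fun ω => hexp 4 ω
    have hInt : Integrable (fun ω =>
        ‖T ω‖^8 + (8*(‖T ω‖^6*R ω) + (64*(‖T ω‖^6*‖Y ω‖^2)
          + (114*(‖T ω‖^4*‖Y ω‖^4) + (60*(‖T ω‖^2*‖Y ω‖^6) + 9*(‖Y ω‖^8)))))) P :=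
      iadd (hXint 8) (iadd (icmul 8 (hXRint 6)) (iadd (icmul 64 (hXYint 6 2))
        (iadd (icmul 114 (hXYint 4 4)) (iadd (icmul 60 (hXYint 2 6)) (icmul 9 (hYint 8))))))
    have hmono : ∫ ω, (‖T ω‖^2 + (2*R ω + ‖Y ω‖^2))^4 ∂P
        ≤ ∫ ω, ‖T ω‖^8 + (8*(‖T ω‖^6*R ω) + (64*(‖T ω‖^6*‖Y ω‖^2)
          + (114*(‖T ω‖^4*‖Y ω‖^4) + (60*(‖T ω‖^2*‖Y ω‖^6) + 9*(‖Y ω‖^8))))) ∂P := by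
      refine integral_mono_ae ((hTYint 8).congr ?_) hInt (ae_of_all _ ?_)
      · filter_upwards with ω using (hexp 4 ω)
      · intro ω
        dsimp only
        nlinarith [pw4 (‖T ω‖^2) (‖Y ω‖^2) (R ω) (hx ω) (hy ω) (hrxy ω)]
    rw [e4]
    refine le_trans hmono ?_
    rw [integral_add (hXint 8) (iadd (icmul 8 (hXRint 6)) (iadd (icmul 64 (hXYint 6 2))
        (iadd (icmul 114 (hXYint 4 4)) (iadd (icmul 60 (hXYint 2 6)) (icmul 9 (hYint 8)))))),
      integral_add (icmul 8 (hXRint 6)) (iadd (icmul 64 (hXYint 6 2))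
        (iadd (icmul 114 (hXYint 4 4)) (iadd (icmul 60 (hXYint 2 6)) (icmul 9 (hYint 8))))),
      integral_add (icmul 64 (hXYint 6 2))
        (iadd (icmul 114 (hXYint 4 4)) (iadd (icmul 60 (hXYint 2 6)) (icmul 9 (hYint 8)))),
      integral_add (icmul 114 (hXYint 4 4)) (iadd (icmul 60 (hXYint 2 6)) (icmul 9 (hYint 8))),
      integral_add (icmul 60 (hXYint 2 6)) (icmul 9 (hYint 8)),
      integral_const_mul, integral_const_mul, integral_const_mul, integral_const_mul,
      integral_const_mul, hzero 6, hfac 6 2, hfac 4 4, hfac 2 6]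
    ring_nf
    exact le_refl _

end AuxLemmas

/-- The eighth-moment bound (5.27) of the paper: there is an absolute constant
`M` such that for truncated i.i.d. entries (`|v₁| ≤ ε√N` a.s., `E|v₁|⁴ ≤ C`)
and independent vectors `s₁ = sVec v N 0`, `s₂ = sVec v N 1`,
`E|s₁* s₂|⁸ ≤ M (1 + C²)/N³`. -/
theorem eighth_moment_inner_product_bound :
    ∃ M : ℝ, 0 < M ∧
      ∀ (N : ℕ), 1 ≤ N → ∀ (ε C : ℝ), 0 < ε → ε ≤ 1 →
      ∀ (Ω : Type) [MeasurableSpace Ω] (P : Measure Ω) [IsProbabilityMeasure P]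
        (v : ℕ → ℕ → Ω → ℂ),
        (∀ i j, Measurable (v i j)) →
        iIndepFun
          (fun q : ℕ × ℕ => v q.1 q.2) P →
        (∀ i j, IdentDistrib (v i j) (v 0 0) P P) →
        (∫ ω, v 0 0 ω ∂P = 0) →
        (∫ ω, ‖v 0 0 ω‖^2 ∂P = 1) →
        (∀ᵐ ω ∂P, ‖v 0 0 ω‖ ≤ ε * Real.sqrt N) →
        (∫ ω, ‖v 0 0 ω‖^4 ∂P ≤ C) →
        ∫ ω, ‖star (sVec v N 0 ω) ⬝ᵥ sVec v N 1 ω‖^8 ∂P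
          ≤ M * (1 + C^2) / (N : ℝ)^3 := by
  classical
  refine ⟨1300, by norm_num, ?_⟩
  intro N hN ε C hε hε1 Ω mΩ P hP v hvmeas hvindep hvid hmean hvar htrunc hfourth
  have hN0 : (0:ℝ) < (N:ℝ) := by exact_mod_cast Nat.lt_of_lt_of_le Nat.zero_lt_one hN
  have hN1 : (1:ℝ) ≤ (N:ℝ) := by exact_mod_cast hN
  have hsq : Real.sqrt N * Real.sqrt N = (N:ℝ) := Real.mul_self_sqrt hN0.le
  -- a.e. bound for all entries
  have htrunc' : ∀ᵐ ω ∂P, ‖v 0 0 ω‖ ≤ Real.sqrt N := by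
    filter_upwards [htrunc] with ω h
    calc ‖v 0 0 ω‖ ≤ ε * Real.sqrt N := h
      _ ≤ 1 * Real.sqrt N := by
          exact mul_le_mul_of_nonneg_right hε1 (Real.sqrt_nonneg _)
      _ = Real.sqrt N := one_mul _
  have hvb : ∀ i j, ∀ᵐ ω ∂P, ‖v i j ω‖ ≤ Real.sqrt N :=
    fun i j => ident_ae_norm_le (hvid i j) htrunc'
  -- the unnormalized variables
  set Y : ℕ → Ω → ℂ := fun i ω => (starRingEnd ℂ) (v i 0 ω) * v i 1 ω with hYdef
  set T : ℕ → Ω → ℂ := fun k ω => ∑ i ∈ Finset.range k, Y i ω with hTdef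
  have hYm : ∀ i, Measurable (Y i) := by
    intro i
    rw [hYdef]
    exact ((Complex.continuous_conj.measurable).comp (hvmeas i 0)).mul (hvmeas i 1)
  have hTm : ∀ k, Measurable (T k) := by
    intro k
    rw [hTdef]
    exact Finset.measurable_sum _ (fun i _ => hYm i)
  have hTY : ∀ k, IndepFun (T k) (Y k) P := by
    intro k
    simp only [hTdef, hYdef]
    exact indep_T_Y v hvmeas hvindep k
  -- a.e. bounds
  have hYb : ∀ k, ∀ᵐ ω ∂P, ‖Y k ω‖ ≤ (N:ℝ) := by
    intro k
    filter_upwards [hvb k 0, hvb k 1] with ω h0 h1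
    rw [hYdef]
    simp only
    rw [norm_mul, RCLike.norm_conj]
    calc ‖v k 0 ω‖ * ‖v k 1 ω‖ ≤ Real.sqrt N * Real.sqrt N :=
          mul_le_mul h0 h1 (norm_nonneg _) (Real.sqrt_nonneg _)
      _ = (N:ℝ) := hsq
  have hYball : ∀ᵐ ω ∂P, ∀ k, ‖Y k ω‖ ≤ (N:ℝ) := ae_all_iff.2 hYb
  have hTb : ∀ k, ∀ᵐ ω ∂P, ‖T k ω‖ ≤ (k:ℝ) * N := by
    intro k
    filter_upwards [hYball] with ω h
    rw [hTdef]
    simp only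
    calc ‖∑ i ∈ Finset.range k, Y i ω‖ ≤ ∑ i ∈ Finset.range k, ‖Y i ω‖ :=
          norm_sum_le _ _
      _ ≤ ∑ _i ∈ Finset.range k, (N:ℝ) := Finset.sum_le_sum (fun i _ => h i)
      _ = (k:ℝ) * N := by simp [mul_comm]
  -- moments of |v|
  set μm : ℕ → ℝ := fun m => ∫ ω, ‖v 0 0 ω‖^m ∂P with hμdef
  have hvint : ∀ i j m, Integrable (fun ω => ‖v i j ω‖^m) P := by
    intro i j m
    refine int_of_bound P ((hvmeas i j).norm.pow_const m) ((Real.sqrt N)^m) ?_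
    filter_upwards [hvb i j] with ω h
    rw [abs_of_nonneg (by positivity)]
    exact pow_le_pow_left₀ (norm_nonneg _) h m
  have hμeq : ∀ i j m, ∫ ω, ‖v i j ω‖^m ∂P = μm m := by
    intro i j m
    exact ((hvid i j).comp (measurable_norm.pow_const m)).integral_eq
  have hμnn : ∀ m, 0 ≤ μm m := fun m => integral_nonneg (fun ω => by positivity)
  have hμ2 : μm 2 = 1 := hvar
  have hμ4C : μm 4 ≤ C := hfourth
  have hC0 : 0 ≤ C := le_trans (hμnn 4) hμ4C
  have hμstep : ∀ m, μm (m + 2) ≤ (N:ℝ) * μm m := by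
    intro m
    rw [hμdef]
    simp only
    rw [← integral_const_mul]
    refine integral_mono_ae (hvint 0 0 (m+2)) ((hvint 0 0 m).const_mul _) ?_
    filter_upwards [hvb 0 0] with ω h
    calc ‖v 0 0 ω‖^(m+2) = ‖v 0 0 ω‖^2 * ‖v 0 0 ω‖^m := by ring
      _ ≤ (N:ℝ) * ‖v 0 0 ω‖^m := by
          refine mul_le_mul_of_nonneg_right ?_ (by positivity)
          calc ‖v 0 0 ω‖^2 ≤ (Real.sqrt N)^2 := pow_le_pow_left₀ (norm_nonneg _) h 2
            _ = (N:ℝ) := by rw [sq, hsq]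
  have hμ4N : μm 4 ≤ (N:ℝ) := by
    have := hμstep 2
    rw [hμ2] at this
    simpa using this
  have hμ6 : μm 6 ≤ (N:ℝ) * C :=
    le_trans (hμstep 4) (mul_le_mul_of_nonneg_left hμ4C hN0.le)
  have hμ8 : μm 8 ≤ (N:ℝ)^2 * C := by
    calc μm 8 ≤ (N:ℝ) * μm 6 := hμstep 6
      _ ≤ (N:ℝ) * ((N:ℝ) * C) := mul_le_mul_of_nonneg_left hμ6 hN0.le
      _ = (N:ℝ)^2 * C := by ring
  -- moments of Y
  have hYmom : ∀ k m, ∫ ω, ‖Y k ω‖^m ∂P = (μm m)^2 := by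
    intro k m
    have hpair : IndepFun (v k 0) (v k 1) P :=
      hvindep.indepFun (show ((k,0) : ℕ × ℕ) ≠ (k,1) by simp)
    have h1 : IndepFun (fun ω => ‖v k 0 ω‖^m) (fun ω => ‖v k 1 ω‖^m) P :=
      hpair.comp (measurable_norm.pow_const m) (measurable_norm.pow_const m)
    have h2 := h1.integral_fun_mul_eq_mul_integral (hvint k 0 m).aestronglyMeasurable (hvint k 1 m).aestronglyMeasurable
    have e : (fun ω => ‖Y k ω‖^m) = fun ω => ‖v k 0 ω‖^m * ‖v k 1 ω‖^m := by
      funext ω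
      rw [hYdef]
      simp only
      rw [norm_mul, RCLike.norm_conj, mul_pow]
    calc ∫ ω, ‖Y k ω‖^m ∂P = ∫ ω, ‖v k 0 ω‖^m * ‖v k 1 ω‖^m ∂P := by rw [e]
      _ = (∫ ω, ‖v k 0 ω‖^m ∂P) * ∫ ω, ‖v k 1 ω‖^m ∂P := h2
      _ = (μm m)^2 := by rw [hμeq, hμeq, sq]
  have hY2 : ∀ k, ∫ ω, ‖Y k ω‖^2 ∂P = 1 := by
    intro k; rw [hYmom k 2, hμ2]; norm_num
  -- mean zero of re/im of entries
  have hvint00 : Integrable (v 0 0) P := by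
    refine (integrable_const (Real.sqrt N)).mono'
      ((hvmeas 0 0).aestronglyMeasurable) ?_
    filter_upwards [hvb 0 0] with ω h using h
  have h00re : ∫ ω, (v 0 0 ω).re ∂P = 0 := by
    have h := integral_re (μ := P) hvint00
    rw [hmean] at h
    simpa using h
  have h00im : ∫ ω, (v 0 0 ω).im ∂P = 0 := by
    have h := integral_im (μ := P) hvint00
    rw [hmean] at h
    simpa using h
  have hre0 : ∀ i j, ∫ ω, (v i j ω).re ∂P = 0 := by
    intro i j
    exact (((hvid i j).comp Complex.measurable_re).integral_eq).trans h00re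
  have him0 : ∀ i j, ∫ ω, (v i j ω).im ∂P = 0 := by
    intro i j
    exact (((hvid i j).comp Complex.measurable_im).integral_eq).trans h00im
  have hvreint : ∀ i j, Integrable (fun ω => (v i j ω).re) P := by
    intro i j
    refine int_of_bound P (Complex.measurable_re.comp (hvmeas i j)) (Real.sqrt N) ?_
    filter_upwards [hvb i j] with ω h
    exact le_trans (Complex.abs_re_le_norm _) h
  have hvimint : ∀ i j, Integrable (fun ω => (v i j ω).im) P := by
    intro i j
    refine int_of_bound P (Complex.measurable_im.comp (hvmeas i j)) (Real.sqrt N) ?_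
    filter_upwards [hvb i j] with ω h
    exact le_trans (Complex.abs_im_le_norm _) h
  have hprodint : ∀ (f g : Ω → ℝ), Measurable f → Measurable g →
      (∀ᵐ ω ∂P, |f ω| ≤ Real.sqrt N) → (∀ᵐ ω ∂P, |g ω| ≤ Real.sqrt N) →
      Integrable (fun ω => f ω * g ω) P := by
    intro f g hf hg hbf hbg
    refine int_of_bound P (hf.mul hg) ((N:ℝ)) ?_
    filter_upwards [hbf, hbg] with ω h1 h2
    rw [abs_mul, ← hsq]
    exact mul_le_mul h1 h2 (abs_nonneg _) (Real.sqrt_nonneg _)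
  have hvreb : ∀ i j, ∀ᵐ ω ∂P, |(v i j ω).re| ≤ Real.sqrt N := by
    intro i j
    filter_upwards [hvb i j] with ω h
    exact le_trans (Complex.abs_re_le_norm _) h
  have hvimb : ∀ i j, ∀ᵐ ω ∂P, |(v i j ω).im| ≤ Real.sqrt N := by
    intro i j
    filter_upwards [hvb i j] with ω h
    exact le_trans (Complex.abs_im_le_norm _) h
  -- mean zero of re/im of Y
  have hYre0 : ∀ k, ∫ ω, (Y k ω).re ∂P = 0 := by
    intro k
    have hpair : IndepFun (v k 0) (v k 1) P :=
      hvindep.indepFun (show ((k,0) : ℕ × ℕ) ≠ (k,1) by simp)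
    have e : (fun ω => (Y k ω).re)
        = fun ω => (v k 0 ω).re * (v k 1 ω).re + (v k 0 ω).im * (v k 1 ω).im := by
      funext ω
      rw [hYdef]
      simp [Complex.mul_re]
    have i1 : Integrable (fun ω => (v k 0 ω).re * (v k 1 ω).re) P :=
      hprodint _ _ (Complex.measurable_re.comp (hvmeas k 0))
        (Complex.measurable_re.comp (hvmeas k 1)) (hvreb k 0) (hvreb k 1)
    have i2 : Integrable (fun ω => (v k 0 ω).im * (v k 1 ω).im) P :=
      hprodint _ _ (Complex.measurable_im.comp (hvmeas k 0))
        (Complex.measurable_im.comp (hvmeas k 1)) (hvimb k 0) (hvimb k 1)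
    have f1 : ∫ ω, (v k 0 ω).re * (v k 1 ω).re ∂P
        = (∫ ω, (v k 0 ω).re ∂P) * (∫ ω, (v k 1 ω).re ∂P) :=
      (hpair.comp Complex.measurable_re Complex.measurable_re).integral_fun_mul_eq_mul_integral
        (hvreint k 0).aestronglyMeasurable (hvreint k 1).aestronglyMeasurable
    have f2 : ∫ ω, (v k 0 ω).im * (v k 1 ω).im ∂P
        = (∫ ω, (v k 0 ω).im ∂P) * (∫ ω, (v k 1 ω).im ∂P) :=
      (hpair.comp Complex.measurable_im Complex.measurable_im).integral_fun_mul_eq_mul_integral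
        (hvimint k 0).aestronglyMeasurable (hvimint k 1).aestronglyMeasurable

    rw [e, integral_add i1 i2, f1, f2]
    simp [him0, hre0]
  have hYim0 : ∀ k, ∫ ω, (Y k ω).im ∂P = 0 := by
    intro k
    have hpair : IndepFun (v k 0) (v k 1) P :=
      hvindep.indepFun (show ((k,0) : ℕ × ℕ) ≠ (k,1) by simp)
    have e : (fun ω => (Y k ω).im)
        = fun ω => (v k 0 ω).re * (v k 1 ω).im + (-(v k 0 ω).im) * (v k 1 ω).re := by
      funext ω
      rw [hYdef]
      simp [Complex.mul_im]
    have i1 : Integrable (fun ω => (v k 0 ω).re * (v k 1 ω).im) P :=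
      hprodint _ _ (Complex.measurable_re.comp (hvmeas k 0))
        (Complex.measurable_im.comp (hvmeas k 1)) (hvreb k 0) (hvimb k 1)
    have i2 : Integrable (fun ω => (-(v k 0 ω).im) * (v k 1 ω).re) P := by
      refine hprodint _ _ ((Complex.measurable_im.comp (hvmeas k 0)).neg)
        (Complex.measurable_re.comp (hvmeas k 1)) ?_ (hvreb k 1)
      filter_upwards [hvimb k 0] with ω h
      rwa [abs_neg]
    have f1 : ∫ ω, (v k 0 ω).re * (v k 1 ω).im ∂P
        = (∫ ω, (v k 0 ω).re ∂P) * (∫ ω, (v k 1 ω).im ∂P) :=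
      (hpair.comp Complex.measurable_re Complex.measurable_im).integral_fun_mul_eq_mul_integral
        (hvreint k 0).aestronglyMeasurable (hvimint k 1).aestronglyMeasurable
    have f2 : ∫ ω, (-(v k 0 ω).im) * (v k 1 ω).re ∂P
        = (∫ ω, (-(v k 0 ω).im) ∂P) * (∫ ω, (v k 1 ω).re ∂P) :=
      (hpair.comp Complex.measurable_im.neg Complex.measurable_re).integral_fun_mul_eq_mul_integral
        ((hvimint k 0).neg).aestronglyMeasurable (hvreint k 1).aestronglyMeasurable
    rw [e, integral_add i1 i2, f1, f2, integral_neg]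
    simp [him0, hre0]
  -- induction on partial sums
  set m4 : ℝ := (μm 4)^2 with hm4def
  set m6 : ℝ := (μm 6)^2 with hm6def
  set m8 : ℝ := (μm 8)^2 with hm8def
  have hm4nn : 0 ≤ m4 := sq_nonneg _
  have hm6nn : 0 ≤ m6 := sq_nonneg _
  have hm8nn : 0 ≤ m8 := sq_nonneg _
  have hY4 : ∀ k, ∫ ω, ‖Y k ω‖^4 ∂P = m4 := fun k => hYmom k 4
  have hY6 : ∀ k, ∫ ω, ‖Y k ω‖^6 ∂P = m6 := fun k => hYmom k 6
  have hY8 : ∀ k, ∫ ω, ‖Y k ω‖^8 ∂P = m8 := fun k => hYmom k 8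
  have hmain : ∀ k : ℕ,
      (∫ ω, ‖T k ω‖^2 ∂P ≤ (k:ℝ)) ∧
      (∫ ω, ‖T k ω‖^4 ∂P ≤ 4*(k:ℝ)^2 + 3*(k:ℝ)*m4) ∧
      (∫ ω, ‖T k ω‖^6 ∂P ≤ 36*(k:ℝ)^3 + 53*(k:ℝ)^2*m4 + 6*(k:ℝ)*m6) ∧
      (∫ ω, ‖T k ω‖^8 ∂P ≤ 576*(k:ℝ)^4 + 1283*(k:ℝ)^3*m4 + 222*(k:ℝ)^2*m6
          + 171*(k:ℝ)^2*m4^2 + 9*(k:ℝ)*m8) := by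
    intro k
    induction k with
    | zero => refine ⟨?_, ?_, ?_, ?_⟩ <;> simp [hTdef]
    | succ k ih =>
      obtain ⟨ih1, ih2, ih3, ih4⟩ := ih
      have eT : ∀ ω, T (k+1) ω = T k ω + Y k ω := by
        intro ω; rw [hTdef]; simp [Finset.sum_range_succ]
      obtain ⟨h1, h2, h3, h4⟩ := key_step P (T k) (Y k) (hTm k) (hYm k) (hTY k)
        ((k:ℝ)*N) N (by positivity) hN0.le (hTb k) (hYb k) (hYre0 k) (hYim0 k)
      refine ⟨?_, ?_, ?_, ?_⟩
      · simp only [eT]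
        rw [h1, hY2 k]
        push_cast
        linarith [ih1]
      · simp only [eT]
        refine le_trans h2 ?_
        rw [hY2 k, hY4 k]
        push_cast
        have knn : (0:ℝ) ≤ (k:ℕ) := Nat.cast_nonneg k
        linarith [ih1, ih2, hm4nn, knn]
      · simp only [eT]
        refine le_trans h3 ?_
        rw [hY2 k, hY4 k, hY6 k]
        push_cast
        have knn : (0:ℝ) ≤ (k:ℕ) := Nat.cast_nonneg k
        have p1 : (∫ ω, ‖T k ω‖^2 ∂P)*m4 ≤ (k:ℝ)*m4 :=
          mul_le_mul_of_nonneg_right ih1 hm4nn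
        have km4 : (0:ℝ) ≤ (k:ℝ)*m4 := mul_nonneg knn hm4nn
        linarith [ih2, ih3, p1, km4, hm6nn, hm4nn, knn, sq_nonneg (k:ℝ)]
      · simp only [eT]
        refine le_trans h4 ?_
        rw [hY2 k, hY4 k, hY6 k, hY8 k]
        push_cast
        have knn : (0:ℝ) ≤ (k:ℕ) := Nat.cast_nonneg k
        have k2nn : (0:ℝ) ≤ (k:ℝ)^2 := sq_nonneg _
        have p1 : (∫ ω, ‖T k ω‖^4 ∂P)*m4 ≤ (4*(k:ℝ)^2 + 3*(k:ℝ)*m4)*m4 :=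
          mul_le_mul_of_nonneg_right ih2 hm4nn
        have p2 : (∫ ω, ‖T k ω‖^2 ∂P)*m6 ≤ (k:ℝ)*m6 :=
          mul_le_mul_of_nonneg_right ih1 hm6nn
        have q1 : (0:ℝ) ≤ (k:ℝ)*m4 := mul_nonneg knn hm4nn
        have q2 : (0:ℝ) ≤ (k:ℝ)^2*m4 := mul_nonneg k2nn hm4nn
        have q3 : (0:ℝ) ≤ (k:ℝ)*m6 := mul_nonneg knn hm6nn
        have q4 : (0:ℝ) ≤ (k:ℝ)*m4^2 := mul_nonneg knn (sq_nonneg _)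
        have q5 : (0:ℝ) ≤ (k:ℝ)^2*m4^2 := mul_nonneg k2nn (sq_nonneg _)
        linarith [ih3, ih4, p1, p2, q1, q2, q3, q4, q5, hm4nn, hm6nn, hm8nn, knn, k2nn,
          sq_nonneg m4]
  -- final moment bounds
  have hm4le : m4 ≤ (N:ℝ) * C := by
    rw [hm4def, sq]
    exact mul_le_mul hμ4N hμ4C (hμnn 4) hN0.le
  have hm6le : m6 ≤ ((N:ℝ) * C)^2 := pow_le_pow_left₀ (hμnn 6) hμ6 2
  have hm8le : m8 ≤ ((N:ℝ)^2 * C)^2 := pow_le_pow_left₀ (hμnn 8) hμ8 2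
  have hm4sqle : m4^2 ≤ ((N:ℝ) * C)^2 := pow_le_pow_left₀ hm4nn hm4le 2
  have hN45 : (N:ℝ)^4 ≤ (N:ℝ)^5 := pow_le_pow_right₀ hN1 (by norm_num)
  have hfin : ∫ ω, ‖T N ω‖^8 ∂P ≤ 1300*(1 + C^2)*(N:ℝ)^5 := by
    refine le_trans (hmain N).2.2.2 ?_
    have t1 : 1283*(N:ℝ)^3*m4 ≤ 1283*(N:ℝ)^4*C := by
      linarith [mul_le_mul_of_nonneg_left hm4le (show (0:ℝ) ≤ 1283*(N:ℝ)^3 by positivity)]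
    have t2 : 222*(N:ℝ)^2*m6 ≤ 222*(N:ℝ)^4*C^2 := by
      linarith [mul_le_mul_of_nonneg_left hm6le (show (0:ℝ) ≤ 222*(N:ℝ)^2 by positivity)]
    have t3 : 171*(N:ℝ)^2*m4^2 ≤ 171*(N:ℝ)^4*C^2 := by
      linarith [mul_le_mul_of_nonneg_left hm4sqle (show (0:ℝ) ≤ 171*(N:ℝ)^2 by positivity)]
    have t4 : 9*(N:ℝ)*m8 ≤ 9*(N:ℝ)^5*C^2 := by
      linarith [mul_le_mul_of_nonneg_left hm8le (show (0:ℝ) ≤ 9*(N:ℝ) by positivity)]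
    have t5 : 1283*(N:ℝ)^4*C ≤ 1283*(N:ℝ)^5*C :=
      mul_le_mul_of_nonneg_right (mul_le_mul_of_nonneg_left hN45 (by norm_num)) hC0
    have t6 : 222*(N:ℝ)^4*C^2 ≤ 222*(N:ℝ)^5*C^2 :=
      mul_le_mul_of_nonneg_right (mul_le_mul_of_nonneg_left hN45 (by norm_num)) (sq_nonneg _)
    have t7 : 171*(N:ℝ)^4*C^2 ≤ 171*(N:ℝ)^5*C^2 :=
      mul_le_mul_of_nonneg_right (mul_le_mul_of_nonneg_left hN45 (by norm_num)) (sq_nonneg _)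
    have t8 : 576*(N:ℝ)^4 ≤ 576*(N:ℝ)^5 := mul_le_mul_of_nonneg_left hN45 (by norm_num)
    linarith [t1, t2, t3, t4, t5, t6, t7, t8,
      mul_nonneg (sq_nonneg (1796*C - 1283)) (pow_nonneg hN0.le 5),
      pow_nonneg hN0.le 5]
  -- reduce the goal to the unnormalized sum
  have hc : ((Real.sqrt N : ℝ) : ℂ) * ((Real.sqrt N : ℝ) : ℂ) = ((N:ℕ) : ℂ) := by
    rw [← Complex.ofReal_mul, hsq]
    push_cast
    rfl
  have hdot : ∀ ω, star (sVec v N 0 ω) ⬝ᵥ sVec v N 1 ω = T N ω / ((N:ℕ):ℂ) := by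
    intro ω
    rw [hTdef]
    simp only [dotProduct, Pi.star_apply, sVec, RCLike.star_def]
    rw [← Fin.sum_univ_eq_sum_range (fun i => Y i ω) N, Finset.sum_div]
    refine Finset.sum_congr rfl ?_
    intro i _
    rw [hYdef]
    simp only
    rw [map_div₀, Complex.conj_ofReal, div_mul_div_comm, hc]
  have hnorm : ∀ ω, ‖star (sVec v N 0 ω) ⬝ᵥ sVec v N 1 ω‖^8
      = ‖T N ω‖^8 / (N:ℝ)^8 := by
    intro ω
    rw [hdot, norm_div, Complex.norm_natCast, div_pow]
  calc ∫ ω, ‖star (sVec v N 0 ω) ⬝ᵥ sVec v N 1 ω‖^8 ∂P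
      = ∫ ω, ‖T N ω‖^8 / (N:ℝ)^8 ∂P := by
        exact integral_congr_ae (ae_of_all _ (fun ω => hnorm ω))
    _ = (∫ ω, ‖T N ω‖^8 ∂P) / (N:ℝ)^8 := integral_div _ _
    _ ≤ 1300 * (1 + C^2) / (N:ℝ)^3 := by
        rw [div_le_div_iff₀ (by positivity) (by positivity)]
        calc (∫ ω, ‖T N ω‖^8 ∂P) * (N:ℝ)^3
            ≤ (1300*(1 + C^2)*(N:ℝ)^5) * (N:ℝ)^3 :=
              mul_le_mul_of_nonneg_right hfin (by positivity)
          _ = 1300*(1 + C^2)*(N:ℝ)^8 := by ring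

end
end

section
/- Let K=K(N) with N/K → c > 0 and let p₁, …, p_K ∈ [0, M̄] be deterministic numbers (depending on N) with (1/K)∑_{k=1}^K p_k → m₁ as N → ∞. Then ∑_{k=1}^K p_k ( s_k* s_k − 1 )² converges in probability, as N → ∞, to (E|v₁₁|⁴ − 1) m₁ / c. -/
open MeasureTheory ProbabilityTheory Filter Matrix Finset
open scoped BigOperators ENNReal NNReal Topology

noncomputable section

/-- The matrix `R_k = S_k P_k S_k* + σ² I`, where `S_k` has columns `s_j`,
`j ≠ k`, `j < K`, and `P_k = diag(p_j, j ≠ k)`; written as a sum of rank-one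
matrices `∑_{j ≠ k} p_j s_j s_j* + σ² I`. -/
def RmatP {Ω : Type*} (v : ℕ → ℕ → Ω → ℂ) (p : ℕ → ℝ) (σ : ℝ) (N K k : ℕ)
    (ω : Ω) : Matrix (Fin N) (Fin N) ℂ :=
  (∑ j ∈ (Finset.range K).erase k,
      ((p j : ℂ)) • Matrix.vecMulVec (sVec v N j ω) (star (sVec v N j ω)))
    + ((σ : ℂ)^2) • (1 : Matrix (Fin N) (Fin N) ℂ)

/-- The real quadratic form `s_k* M s_k`. -/
def qf {Ω : Type*} (v : ℕ → ℕ → Ω → ℂ) (N k : ℕ) (M : Matrix (Fin N) (Fin N) ℂ)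
    (ω : Ω) : ℝ :=
  (star (sVec v N k ω) ⬝ᵥ M.mulVec (sVec v N k ω)).re

/-- `s_k* s_k` (a real number). -/
def sNormSq {Ω : Type*} (v : ℕ → ℕ → Ω → ℂ) (N k : ℕ) (ω : Ω) : ℝ :=
  (star (sVec v N k ω) ⬝ᵥ sVec v N k ω).re

/-! ### Auxiliary elementary inequalities -/

section Aux

set_option linter.unusedSectionVars false

lemma amgm2' (a b : ℝ) : |a * b| ≤ (a^2 + b^2)/2 := by
  rw [abs_mul]
  nlinarith [sq_nonneg (|a| - |b|), sq_abs a, sq_abs b]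

lemma amgm4' (a b c d : ℝ) : |a * b * c * d| ≤ (a^4 + b^4 + c^4 + d^4)/4 := by
  have ha : a^4 = |a|^4 := by rw [← abs_pow]; exact (abs_of_nonneg (by positivity)).symm
  have hb : b^4 = |b|^4 := by rw [← abs_pow]; exact (abs_of_nonneg (by positivity)).symm
  have hc : c^4 = |c|^4 := by rw [← abs_pow]; exact (abs_of_nonneg (by positivity)).symm
  have hd : d^4 = |d|^4 := by rw [← abs_pow]; exact (abs_of_nonneg (by positivity)).symm
  rw [abs_mul, abs_mul, abs_mul, ha, hb, hc, hd]
  nlinarith [abs_nonneg a, abs_nonneg b, abs_nonneg c, abs_nonneg d,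
    sq_nonneg (|a| * |b| - |c| * |d|), sq_nonneg (|a|^2 - |b|^2), sq_nonneg (|c|^2 - |d|^2),
    mul_nonneg (abs_nonneg a) (abs_nonneg b), mul_nonneg (abs_nonneg c) (abs_nonneg d)]

lemma dom_bound1 (x : ℝ) (hx : 0 ≤ x) : |x^2 - 1| ≤ 16*(1 + x^8) := by
  rw [abs_le]
  constructor <;>
    nlinarith [pow_nonneg hx 8, sq_nonneg x, sq_nonneg (x^4-1), sq_nonneg (x^2-1)]

lemma dom_bound2 (x : ℝ) (hx : 0 ≤ x) : (x^2 - 1)^2 ≤ 16*(1 + x^8) := by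
  nlinarith [pow_nonneg hx 8, sq_nonneg x, sq_nonneg (x^4-1), sq_nonneg (x^2-1),
    sq_nonneg (x^2+1)]

lemma dom_bound4 (x : ℝ) (hx : 0 ≤ x) : (x^2 - 1)^4 ≤ 16*(1 + x^8) := by
  nlinarith [pow_nonneg hx 8, sq_nonneg x, sq_nonneg (x^4-1), sq_nonneg (x^2-1),
    sq_nonneg (x^2+1), sq_nonneg ((x^2-1)^2 - 1), pow_nonneg hx 4, sq_nonneg (x^3-x),
    sq_nonneg (x^4-x^2)]

lemma dom_bound_sq (x : ℝ) (hx : 0 ≤ x) : x^2 ≤ 16*(1 + x^8) := by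
  nlinarith [pow_nonneg hx 8, sq_nonneg x, sq_nonneg (x^4-1), sq_nonneg (x^2-1)]

lemma dom_bound_fourth (x : ℝ) (hx : 0 ≤ x) : x^4 ≤ 16*(1 + x^8) := by
  nlinarith [pow_nonneg hx 8, sq_nonneg x, sq_nonneg (x^4-1), sq_nonneg (x^2-1),
    pow_nonneg hx 4]

lemma pairing_or (i j l m : ℕ) :
    ((i = j ∧ l = m) ∨ (i = l ∧ j = m) ∨ (i = m ∧ j = l))
    ∨ (i ≠ j ∧ i ≠ l ∧ i ≠ m) ∨ (j ≠ i ∧ j ≠ l ∧ j ≠ m)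
    ∨ (l ≠ i ∧ l ≠ j ∧ l ≠ m) ∨ (m ≠ i ∧ m ≠ j ∧ m ≠ l) := by
  omega

lemma sum_sq_expand (r : Finset ℕ) (a : ℕ → ℝ) :
    (∑ i ∈ r, a i)^2 = ∑ i ∈ r, ∑ j ∈ r, a i * a j := by
  rw [sq, Finset.sum_mul_sum]

lemma sum_pow4_expand (r : Finset ℕ) (a : ℕ → ℝ) :
    (∑ i ∈ r, a i)^4
      = ∑ i ∈ r, ∑ j ∈ r, ∑ l ∈ r, ∑ m ∈ r, a i * a j * a l * a m := by
  have h2 : (∑ i ∈ r, a i)^2 = ∑ i ∈ r, ∑ j ∈ r, a i * a j := sum_sq_expand r a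
  calc (∑ i ∈ r, a i)^4 = ((∑ i ∈ r, a i)^2)^2 := by ring
    _ = (∑ i ∈ r, ∑ j ∈ r, a i * a j)^2 := by rw [h2]
    _ = ∑ i ∈ r, ∑ l ∈ r, ((∑ j ∈ r, a i * a j) * (∑ m ∈ r, a l * a m)) := by
        rw [sq, Finset.sum_mul_sum]
    _ = ∑ i ∈ r, ∑ l ∈ r, ∑ j ∈ r, ∑ m ∈ r, (a i * a j) * (a l * a m) := by
        exact Finset.sum_congr rfl fun i _ => Finset.sum_congr rfl fun l _ =>
          Finset.sum_mul_sum _ _ _ _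
    _ = ∑ i ∈ r, ∑ j ∈ r, ∑ l ∈ r, ∑ m ∈ r, a i * a j * a l * a m := by
        refine Finset.sum_congr rfl fun i _ => ?_
        rw [Finset.sum_comm]
        exact Finset.sum_congr rfl fun j _ => Finset.sum_congr rfl fun l _ =>
          Finset.sum_congr rfl fun m _ => by ring

/-! ### Abstract moment computations for independent centered families -/

variable {Ω : Type*} [MeasurableSpace Ω] (P : Measure Ω) [IsProbabilityMeasure P]
  (X : ℕ → Ω → ℝ)

lemma prod2_integrable (hXm : ∀ i, AEStronglyMeasurable (X i) P)
    (hint2 : ∀ i, Integrable (fun ω => (X i ω)^2) P) (i j : ℕ) :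
    Integrable (fun ω => X i ω * X j ω) P := by
  refine (((hint2 i).add (hint2 j)).div_const 2).mono' ((hXm i).mul (hXm j))
    (ae_of_all _ fun ω => ?_)
  rw [Real.norm_eq_abs]
  exact amgm2' _ _

lemma prod4_integrable (hXm : ∀ i, AEStronglyMeasurable (X i) P)
    (hint4 : ∀ i, Integrable (fun ω => (X i ω)^4) P) (i j l m : ℕ) :
    Integrable (fun ω => X i ω * X j ω * X l ω * X m ω) P := by
  have hmul : AEStronglyMeasurable (fun ω => X i ω * X j ω * X l ω * X m ω) P :=
    (((hXm i).mul (hXm j)).mul (hXm l)).mul (hXm m)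
  refine ((((hint4 i).add (hint4 j)).add ((hint4 l).add (hint4 m))).div_const 4).mono'
    hmul (ae_of_all _ fun ω => ?_)
  rw [Real.norm_eq_abs]
  calc |X i ω * X j ω * X l ω * X m ω| ≤ (X i ω^4 + X j ω^4 + X l ω^4 + X m ω^4)/4 :=
      amgm4' _ _ _ _
    _ = (X i ω^4 + X j ω^4 + (X l ω^4 + X m ω^4))/4 := by ring

lemma integrable_sum_sq (hXm : ∀ i, AEStronglyMeasurable (X i) P)
    (hint2 : ∀ i, Integrable (fun ω => (X i ω)^2) P) (N : ℕ) :
    Integrable (fun ω => (∑ i ∈ Finset.range N, X i ω)^2) P := by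
  have : (fun ω => (∑ i ∈ Finset.range N, X i ω)^2)
      = fun ω => ∑ i ∈ Finset.range N, ∑ j ∈ Finset.range N, X i ω * X j ω :=
    funext fun ω => sum_sq_expand _ _
  rw [this]
  exact integrable_finset_sum _ fun i _ => integrable_finset_sum _ fun j _ =>
    prod2_integrable P X hXm hint2 i j

lemma integrable_sum_pow4 (hXm : ∀ i, AEStronglyMeasurable (X i) P)
    (hint4 : ∀ i, Integrable (fun ω => (X i ω)^4) P) (N : ℕ) :
    Integrable (fun ω => (∑ i ∈ Finset.range N, X i ω)^4) P := by
  have : (fun ω => (∑ i ∈ Finset.range N, X i ω)^4)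
      = fun ω => ∑ i ∈ Finset.range N, ∑ j ∈ Finset.range N, ∑ l ∈ Finset.range N,
          ∑ m ∈ Finset.range N, X i ω * X j ω * X l ω * X m ω :=
    funext fun ω => sum_pow4_expand _ _
  rw [this]
  exact integrable_finset_sum _ fun i _ => integrable_finset_sum _ fun j _ =>
    integrable_finset_sum _ fun l _ => integrable_finset_sum _ fun m _ =>
      prod4_integrable P X hXm hint4 i j l m

lemma second_moment_sum (hXm : ∀ i, AEStronglyMeasurable (X i) P)
    (hint2 : ∀ i, Integrable (fun ω => (X i ω)^2) P)
    (hmean : ∀ i, ∫ ω, X i ω ∂P = 0)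
    (m2 : ℝ) (h2 : ∀ i, ∫ ω, (X i ω)^2 ∂P = m2)
    (hind : ∀ i j, i ≠ j → IndepFun (X i) (X j) P)
    (N : ℕ) :
    ∫ ω, (∑ i ∈ Finset.range N, X i ω)^2 ∂P = N * m2 := by
  have hprod := prod2_integrable P X hXm hint2
  have e1 : (fun ω => (∑ i ∈ Finset.range N, X i ω)^2)
      = fun ω => ∑ i ∈ Finset.range N, ∑ j ∈ Finset.range N, X i ω * X j ω :=
    funext fun ω => sum_sq_expand _ _
  rw [e1, integral_finset_sum _ fun i _ => integrable_finset_sum _ fun j _ => hprod i j]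
  have : ∀ i ∈ Finset.range N,
      (∫ ω, ∑ j ∈ Finset.range N, X i ω * X j ω ∂P) = m2 := by
    intro i hi
    rw [integral_finset_sum _ fun j _ => hprod i j,
      Finset.sum_eq_single_of_mem i hi]
    · rw [← h2 i]; congr 1; funext ω; rw [sq]
    · intro j _ hj
      have h := (hind i j (Ne.symm hj)).integral_mul_eq_mul_integral (hXm i) (hXm j)
      rw [hmean i, zero_mul] at h
      exact h
  rw [Finset.sum_congr rfl this, Finset.sum_const, Finset.card_range, nsmul_eq_mul]

lemma var_sum_bound (hXm : ∀ i, AEStronglyMeasurable (X i) P)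
    (hint2 : ∀ i, Integrable (fun ω => (X i ω)^2) P)
    (hmean : ∀ i, ∫ ω, X i ω ∂P = 0)
    (K₀ : ℕ) (C : ℝ)
    (h2 : ∀ i, i < K₀ → ∫ ω, (X i ω)^2 ∂P ≤ C)
    (hind : ∀ i j, i ≠ j → IndepFun (X i) (X j) P) :
    ∫ ω, (∑ i ∈ Finset.range K₀, X i ω)^2 ∂P ≤ K₀ * C := by
  have hprod := prod2_integrable P X hXm hint2
  have e1 : (fun ω => (∑ i ∈ Finset.range K₀, X i ω)^2)
      = fun ω => ∑ i ∈ Finset.range K₀, ∑ j ∈ Finset.range K₀, X i ω * X j ω :=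
    funext fun ω => sum_sq_expand _ _
  rw [e1, integral_finset_sum _ fun i _ => integrable_finset_sum _ fun j _ => hprod i j]
  have hle : ∀ i ∈ Finset.range K₀,
      (∫ ω, ∑ j ∈ Finset.range K₀, X i ω * X j ω ∂P) ≤ C := by
    intro i hi
    rw [integral_finset_sum _ fun j _ => hprod i j,
      Finset.sum_eq_single_of_mem i hi]
    · have : (∫ ω, X i ω * X i ω ∂P) = ∫ ω, (X i ω)^2 ∂P := by
        congr 1; funext ω; rw [sq]
      rw [this]
      exact h2 i (Finset.mem_range.mp hi)
    · intro j _ hj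
      have h := (hind i j (Ne.symm hj)).integral_mul_eq_mul_integral (hXm i) (hXm j)
      rw [hmean i, zero_mul] at h
      exact h
  calc ∑ i ∈ Finset.range K₀, ∫ ω, ∑ j ∈ Finset.range K₀, X i ω * X j ω ∂P
      ≤ ∑ _i ∈ Finset.range K₀, C := Finset.sum_le_sum hle
    _ = K₀ * C := by rw [Finset.sum_const, Finset.card_range, nsmul_eq_mul]

lemma fourth_moment_sum (hXm : ∀ i, AEStronglyMeasurable (X i) P)
    (hint4 : ∀ i, Integrable (fun ω => (X i ω)^4) P)
    (hmean : ∀ i, ∫ ω, X i ω ∂P = 0)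
    (m4 : ℝ) (h4 : ∀ i, ∫ ω, (X i ω)^4 ∂P = m4)
    (hind3 : ∀ i j l m : ℕ, i ≠ j → i ≠ l → i ≠ m →
      IndepFun (X i) (fun ω => X j ω * X l ω * X m ω) P)
    (N : ℕ) :
    ∫ ω, (∑ i ∈ Finset.range N, X i ω)^4 ∂P ≤ 3 * (N:ℝ)^2 * m4 := by
  classical
  have hm4 : 0 ≤ m4 := (h4 0) ▸ integral_nonneg fun ω => by positivity
  have hprod := prod4_integrable P X hXm hint4
  set Q : ℕ → ℕ → ℕ → ℕ → ℝ := fun i j l m => ∫ ω, X i ω * X j ω * X l ω * X m ω ∂P with hQ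
  have hQb : ∀ i j l m, |Q i j l m| ≤ m4 := by
    intro i j l m
    have h1 : |Q i j l m| ≤ ∫ ω, |X i ω * X j ω * X l ω * X m ω| ∂P := by
      have h := norm_integral_le_integral_norm (μ := P)
        (f := fun ω => X i ω * X j ω * X l ω * X m ω)
      simp only [Real.norm_eq_abs] at h
      exact h
    refine h1.trans ?_
    have h2 : ∫ ω, |X i ω * X j ω * X l ω * X m ω| ∂P
        ≤ ∫ ω, (X i ω^4 + X j ω^4 + (X l ω^4 + X m ω^4))/4 ∂P := by
      refine integral_mono (hprod i j l m).abs
        ((((hint4 i).add (hint4 j)).add ((hint4 l).add (hint4 m))).div_const 4)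
        fun ω => ?_
      calc |X i ω * X j ω * X l ω * X m ω| ≤ (X i ω^4 + X j ω^4 + X l ω^4 + X m ω^4)/4 :=
          amgm4' _ _ _ _
        _ = (X i ω^4 + X j ω^4 + (X l ω^4 + X m ω^4))/4 := by ring
    refine h2.trans ?_
    have e1 := integral_add (μ := P) ((hint4 i).add (hint4 j)) ((hint4 l).add (hint4 m))
    have e2 := integral_add (μ := P) (hint4 i) (hint4 j)
    have e3 := integral_add (μ := P) (hint4 l) (hint4 m)
    simp only [Pi.add_apply] at e1 e2 e3
    rw [integral_div, e1, e2, e3, h4 i, h4 j, h4 l, h4 m]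
    linarith
  have key : ∀ a b c d : ℕ, a ≠ b → a ≠ c → a ≠ d →
      (∫ ω, X a ω * (X b ω * X c ω * X d ω) ∂P) = 0 := by
    intro a b c d h1 h2 h3
    have h := (hind3 a b c d h1 h2 h3).integral_mul_eq_mul_integral (hXm a)
      (((hXm b).mul (hXm c)).mul (hXm d))
    rw [hmean a, zero_mul] at h
    exact h
  have hzero : ∀ i j l m : ℕ,
      ¬((i = j ∧ l = m) ∨ (i = l ∧ j = m) ∨ (i = m ∧ j = l)) → Q i j l m = 0 := by
    intro i j l m hnp
    rcases pairing_or i j l m with hP | ⟨h1,h2,h3⟩ | ⟨h1,h2,h3⟩ | ⟨h1,h2,h3⟩ | ⟨h1,h2,h3⟩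
    · exact absurd hP hnp
    · have heq : (fun ω => X i ω * X j ω * X l ω * X m ω)
          = fun ω => X i ω * (X j ω * X l ω * X m ω) := funext fun ω => by ring
      rw [hQ]; simp only []; rw [heq]; exact key i j l m h1 h2 h3
    · have heq : (fun ω => X i ω * X j ω * X l ω * X m ω)
          = fun ω => X j ω * (X i ω * X l ω * X m ω) := funext fun ω => by ring
      rw [hQ]; simp only []; rw [heq]; exact key j i l m h1 h2 h3
    · have heq : (fun ω => X i ω * X j ω * X l ω * X m ω)
          = fun ω => X l ω * (X i ω * X j ω * X m ω) := funext fun ω => by ring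
      rw [hQ]; simp only []; rw [heq]; exact key l i j m h1 h2 h3
    · have heq : (fun ω => X i ω * X j ω * X l ω * X m ω)
          = fun ω => X m ω * (X i ω * X j ω * X l ω) := funext fun ω => by ring
      rw [hQ]; simp only []; rw [heq]; exact key m i j l h1 h2 h3
  have e2 : ∫ ω, (∑ i ∈ Finset.range N, X i ω)^4 ∂P
      = ∑ i ∈ Finset.range N, ∑ j ∈ Finset.range N, ∑ l ∈ Finset.range N,
          ∑ m ∈ Finset.range N, Q i j l m := by
    have e1 : (fun ω => (∑ i ∈ Finset.range N, X i ω)^4)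
        = fun ω => ∑ i ∈ Finset.range N, ∑ j ∈ Finset.range N, ∑ l ∈ Finset.range N,
            ∑ m ∈ Finset.range N, X i ω * X j ω * X l ω * X m ω :=
      funext fun ω => sum_pow4_expand _ _
    rw [e1, integral_finset_sum _ fun i _ => integrable_finset_sum _ fun j _ =>
      integrable_finset_sum _ fun l _ => integrable_finset_sum _ fun m _ => hprod i j l m]
    refine Finset.sum_congr rfl fun i _ => ?_
    rw [integral_finset_sum _ fun j _ => integrable_finset_sum _ fun l _ =>
      integrable_finset_sum _ fun m _ => hprod i j l m]
    refine Finset.sum_congr rfl fun j _ => ?_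
    rw [integral_finset_sum _ fun l _ => integrable_finset_sum _ fun m _ => hprod i j l m]
    refine Finset.sum_congr rfl fun l _ => ?_
    rw [integral_finset_sum _ fun m _ => hprod i j l m]
  rw [e2]
  set r := Finset.range N with hr
  set A : Finset (ℕ × ℕ × ℕ × ℕ) := r ×ˢ r ×ˢ r ×ˢ r with hA
  have e3 : ∑ i ∈ r, ∑ j ∈ r, ∑ l ∈ r, ∑ m ∈ r, Q i j l m
      = ∑ t ∈ A, Q t.1 t.2.1 t.2.2.1 t.2.2.2 := by
    rw [hA]; simp only [Finset.sum_product]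
  rw [e3]
  set p1 : ℕ × ℕ × ℕ × ℕ → Prop := fun t => t.1 = t.2.1 ∧ t.2.2.1 = t.2.2.2 with hp1
  set p2 : ℕ × ℕ × ℕ × ℕ → Prop := fun t => t.1 = t.2.2.1 ∧ t.2.1 = t.2.2.2 with hp2
  set p3 : ℕ × ℕ × ℕ × ℕ → Prop := fun t => t.1 = t.2.2.2 ∧ t.2.1 = t.2.2.1 with hp3
  set pr : ℕ × ℕ × ℕ × ℕ → Prop := fun t => p1 t ∨ p2 t ∨ p3 t with hpr
  have e4 : ∑ t ∈ A, Q t.1 t.2.1 t.2.2.1 t.2.2.2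
      = ∑ t ∈ A.filter pr, Q t.1 t.2.1 t.2.2.1 t.2.2.2 := by
    refine (Finset.sum_filter_of_ne fun t _ hne => ?_).symm
    by_contra hcon
    refine hne (hzero _ _ _ _ ?_)
    simp only [hp1, hp2, hp3] at hcon
    exact hcon
  rw [e4]
  have hcardp : ∀ (pp : ℕ × ℕ × ℕ × ℕ → Prop) [DecidablePred pp]
      (f : ℕ × ℕ × ℕ × ℕ → ℕ × ℕ),
      (∀ t, pp t → f t = (t.1, t.2.1) ∨ f t = (t.1, t.2.2.1)) →
      (∀ t t', pp t → pp t' → f t = f t' → t = t') →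
      (A.filter pp).card ≤ N^2 := by
    intro pp _ f hf hinj
    have h : (A.filter pp).card ≤ (r ×ˢ r).card := by
      refine Finset.card_le_card_of_injOn f ?_ ?_
      · intro t ht
        simp only [Finset.mem_coe, Finset.mem_filter, hA, Finset.mem_product, hr, Finset.mem_range] at ht
        rcases hf t ht.2 with h' | h' <;>
          simp [h', Finset.mem_product, hr, Finset.mem_range, ht.1.1, ht.1.2.1, ht.1.2.2.1]
      · intro t ht t' ht' hff
        simp only [Finset.coe_filter, Set.mem_setOf_eq] at ht ht'
        exact hinj t t' ht.2 ht'.2 hff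
    calc (A.filter pp).card ≤ (r ×ˢ r).card := h
      _ = N^2 := by rw [Finset.card_product, hr, Finset.card_range, sq]
  have hc1 : (A.filter p1).card ≤ N^2 := by
    refine hcardp p1 (fun t => (t.1, t.2.2.1)) (fun t _ => Or.inr rfl) ?_
    intro t t' h h' hff
    obtain ⟨a1, a2, a3, a4⟩ := t; obtain ⟨b1, b2, b3, b4⟩ := t'
    obtain ⟨e1, e2⟩ : a1 = a2 ∧ a3 = a4 := h
    obtain ⟨f1, f2⟩ : b1 = b2 ∧ b3 = b4 := h'
    simp only [Prod.mk.injEq] at hff ⊢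
    omega
  have hc2 : (A.filter p2).card ≤ N^2 := by
    refine hcardp p2 (fun t => (t.1, t.2.1)) (fun t _ => Or.inl rfl) ?_
    intro t t' h h' hff
    obtain ⟨a1, a2, a3, a4⟩ := t; obtain ⟨b1, b2, b3, b4⟩ := t'
    obtain ⟨e1, e2⟩ : a1 = a3 ∧ a2 = a4 := h
    obtain ⟨f1, f2⟩ : b1 = b3 ∧ b2 = b4 := h'
    simp only [Prod.mk.injEq] at hff ⊢
    omega
  have hc3 : (A.filter p3).card ≤ N^2 := by
    refine hcardp p3 (fun t => (t.1, t.2.1)) (fun t _ => Or.inl rfl) ?_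
    intro t t' h h' hff
    obtain ⟨a1, a2, a3, a4⟩ := t; obtain ⟨b1, b2, b3, b4⟩ := t'
    obtain ⟨e1, e2⟩ : a1 = a4 ∧ a2 = a3 := h
    obtain ⟨f1, f2⟩ : b1 = b4 ∧ b2 = b3 := h'
    simp only [Prod.mk.injEq] at hff ⊢
    omega
  have hcard : ((A.filter pr).card : ℝ) ≤ 3 * (N:ℝ)^2 := by
    have hsub : A.filter pr ⊆ (A.filter p1) ∪ ((A.filter p2) ∪ (A.filter p3)) := by
      intro t ht
      simp only [Finset.mem_filter, Finset.mem_union, hpr] at ht ⊢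
      tauto
    have hn : (A.filter pr).card ≤ 3 * N^2 := by
      calc (A.filter pr).card ≤ ((A.filter p1) ∪ ((A.filter p2) ∪ (A.filter p3))).card :=
          Finset.card_le_card hsub
        _ ≤ (A.filter p1).card + ((A.filter p2) ∪ (A.filter p3)).card :=
          Finset.card_union_le _ _
        _ ≤ (A.filter p1).card + ((A.filter p2).card + (A.filter p3).card) :=
          Nat.add_le_add_left (Finset.card_union_le _ _) _
        _ ≤ 3 * N^2 := by omega
    calc ((A.filter pr).card : ℝ) ≤ ((3 * N^2 : ℕ) : ℝ) := Nat.cast_le.mpr hn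
      _ = 3 * (N:ℝ)^2 := by push_cast; ring
  calc ∑ t ∈ A.filter pr, Q t.1 t.2.1 t.2.2.1 t.2.2.2
      ≤ ∑ t ∈ A.filter pr, m4 :=
        Finset.sum_le_sum fun t _ => (le_abs_self _).trans (hQb _ _ _ _)
    _ = ((A.filter pr).card : ℝ) * m4 := by rw [Finset.sum_const, nsmul_eq_mul]
    _ ≤ 3 * (N:ℝ)^2 * m4 := mul_le_mul_of_nonneg_right hcard hm4

end Aux

/-! ### Plumbing: the `sNormSq` formula and independence lemmas -/

section Plumb

set_option linter.unusedSectionVars false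

variable {Ω : Type*} [MeasurableSpace Ω] {P : Measure Ω} [IsProbabilityMeasure P]
  (v : ℕ → ℕ → Ω → ℂ)

lemma sNormSq_sub_one (N k : ℕ) (hN : 0 < N) (ω : Ω) :
    sNormSq v N k ω - 1 = (∑ i ∈ Finset.range N, (‖v i k ω‖^2 - 1)) / N := by
  have hNR : (0:ℝ) < N := by exact_mod_cast hN
  have hterm : ∀ z : ℂ, ((starRingEnd ℂ) z * z).re = ‖z‖^2 := fun z => by
    rw [← Complex.normSq_eq_conj_mul_self, Complex.ofReal_re, ← Complex.sq_norm]
  have h1 : sNormSq v N k ω = (∑ i ∈ Finset.range N, ‖v i k ω‖^2) / N := by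
    calc sNormSq v N k ω
        = ∑ i : Fin N, ‖v i k ω / ((Real.sqrt N : ℝ) : ℂ)‖^2 := by
          unfold sNormSq sVec
          rw [dotProduct, Complex.re_sum]
          refine Finset.sum_congr rfl fun i _ => ?_
          rw [Pi.star_apply, Complex.star_def]
          exact hterm _
      _ = ∑ i : Fin N, ‖v i k ω‖^2 / N := by
          refine Finset.sum_congr rfl fun i _ => ?_
          rw [norm_div, Complex.norm_real, Real.norm_eq_abs,
            abs_of_nonneg (Real.sqrt_nonneg _), div_pow,
            Real.sq_sqrt (Nat.cast_nonneg N)]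
      _ = (∑ i ∈ Finset.range N, ‖v i k ω‖^2) / N := by
          rw [← Finset.sum_div, Fin.sum_univ_eq_sum_range (fun j => ‖v j k ω‖^2) N]
  rw [h1, Finset.sum_sub_distrib, Finset.sum_const, Finset.card_range, nsmul_eq_mul, mul_one,
    sub_div, div_self hNR.ne']

lemma indep_triple (hmeas : ∀ i j, Measurable (v i j))
    (hindep : iIndepFun (fun q : ℕ × ℕ => v q.1 q.2) P)
    (k i j l m : ℕ) (hij : i ≠ j) (hil : i ≠ l) (him : i ≠ m) :
    IndepFun (fun ω => ‖v i k ω‖^2 - 1)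
      (fun ω => (‖v j k ω‖^2 - 1) * (‖v l k ω‖^2 - 1) * (‖v m k ω‖^2 - 1)) P := by
  classical
  have hd : Disjoint ({(i,k)} : Finset (ℕ × ℕ)) ({(j,k),(l,k),(m,k)} : Finset (ℕ × ℕ)) := by
    simp only [Finset.disjoint_left, Finset.mem_singleton, Finset.mem_insert]
    rintro q rfl
    simp only [Prod.mk.injEq]
    push_neg
    exact ⟨fun h => absurd h hij, fun h => absurd h hil, fun h => absurd h him⟩
  have hbase := hindep.indepFun_finset {(i,k)} {(j,k),(l,k),(m,k)} hd
    (fun q => hmeas q.1 q.2)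
  have hmem1 : ((i,k) : ℕ × ℕ) ∈ ({(i,k)} : Finset (ℕ × ℕ)) := Finset.mem_singleton_self _
  have hmemj : ((j,k) : ℕ × ℕ) ∈ ({(j,k),(l,k),(m,k)} : Finset (ℕ × ℕ)) := by simp
  have hmeml : ((l,k) : ℕ × ℕ) ∈ ({(j,k),(l,k),(m,k)} : Finset (ℕ × ℕ)) := by simp
  have hmemm : ((m,k) : ℕ × ℕ) ∈ ({(j,k),(l,k),(m,k)} : Finset (ℕ × ℕ)) := by simp
  have hφ : Measurable (fun x : (({(i,k)} : Finset (ℕ × ℕ)) → ℂ) =>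
      ‖x ⟨(i,k), hmem1⟩‖^2 - 1) :=
    ((measurable_pi_apply _).norm.pow_const 2).sub measurable_const
  have hψ : Measurable (fun x : (({(j,k),(l,k),(m,k)} : Finset (ℕ × ℕ)) → ℂ) =>
      (‖x ⟨(j,k), hmemj⟩‖^2 - 1) * (‖x ⟨(l,k), hmeml⟩‖^2 - 1) * (‖x ⟨(m,k), hmemm⟩‖^2 - 1)) := by
    exact ((((measurable_pi_apply _).norm.pow_const 2).sub measurable_const).mul
      (((measurable_pi_apply _).norm.pow_const 2).sub measurable_const)).mul
      (((measurable_pi_apply _).norm.pow_const 2).sub measurable_const)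
  exact hbase.comp hφ hψ

lemma indep_columns (hmeas : ∀ i j, Measurable (v i j))
    (hindep : iIndepFun (fun q : ℕ × ℕ => v q.1 q.2) P)
    (N k k' : ℕ) (hkk' : k ≠ k')
    (g g' : (Fin N → ℂ) → ℝ) (hg : Measurable g) (hg' : Measurable g') :
    IndepFun (fun ω => g (fun i => v i k ω)) (fun ω => g' (fun i => v i k' ω)) P := by
  classical
  have hd : Disjoint ((Finset.range N) ×ˢ ({k} : Finset ℕ))
      ((Finset.range N) ×ˢ ({k'} : Finset ℕ)) := by
    simp only [Finset.disjoint_left, Finset.mem_product, Finset.mem_singleton]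
    rintro ⟨a, b⟩ ⟨_, rfl⟩ ⟨_, h2⟩
    exact hkk' h2
  have hbase := hindep.indepFun_finset _ _ hd (fun q => hmeas q.1 q.2)
  have hτ : Measurable
      (fun x : ((((Finset.range N) ×ˢ ({k} : Finset ℕ)) : Finset (ℕ × ℕ)) → ℂ) =>
      fun i : Fin N => x ⟨(i, k), Finset.mem_product.mpr
        ⟨Finset.mem_range.mpr i.isLt, Finset.mem_singleton_self k⟩⟩) :=
    measurable_pi_lambda _ fun i => measurable_pi_apply _
  have hτ' : Measurable
      (fun x : ((((Finset.range N) ×ˢ ({k'} : Finset ℕ)) : Finset (ℕ × ℕ)) → ℂ) =>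
      fun i : Fin N => x ⟨(i, k'), Finset.mem_product.mpr
        ⟨Finset.mem_range.mpr i.isLt, Finset.mem_singleton_self k'⟩⟩) :=
    measurable_pi_lambda _ fun i => measurable_pi_apply _
  exact hbase.comp (hg.comp hτ) (hg'.comp hτ')

end Plumb

/-- The limit of the term `G₁` of Section 5 of the paper:
`∑_k p_k (s_k* s_k − 1)² → (E|v₁₁|⁴ − 1) m₁ / c` in probability. -/
theorem G1_limit
    {Ω : Type*} [MeasurableSpace Ω] (P : Measure Ω) [IsProbabilityMeasure P]
    (v : ℕ → ℕ → Ω → ℂ) (hmeas : ∀ i j, Measurable (v i j))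
    (hindep : iIndepFun
      (fun p : ℕ × ℕ => v p.1 p.2) P)
    (hident : ∀ i j, IdentDistrib (v i j) (v 0 0) P P)
    (hmean : ∫ ω, v 0 0 ω ∂P = 0)
    (hvar : ∫ ω, ‖v 0 0 ω‖^2 ∂P = 1)
    (heighth : Integrable (fun ω => ‖v 0 0 ω‖^8) P)
    (K : ℕ → ℕ) (c : ℝ) (hc : 0 < c)
    (hK : Tendsto (fun N : ℕ => (N : ℝ) / (K N : ℝ)) atTop (𝓝 c))
    (Mbar : ℝ) (p : ℕ → ℕ → ℝ)
    (hp : ∀ N k, k < K N → p N k ∈ Set.Icc (0 : ℝ) Mbar)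
    (m1 : ℝ)
    (hm1 : Tendsto (fun N : ℕ => (1 / (K N : ℝ)) * ∑ k ∈ Finset.range (K N), p N k)
      atTop (𝓝 m1))
    (κ : ℝ) (hκ : κ = ∫ ω, ‖v 0 0 ω‖^4 ∂P) :
    TendstoInMeasure P
      (fun N ω => ∑ k ∈ Finset.range (K N), p N k * (sNormSq v N k ω - 1)^2)
      atTop (fun _ => (κ - 1) * m1 / c) := by
  classical
  -- measurability of the centered variables
  have hYmeas : ∀ i k, Measurable (fun ω => ‖v i k ω‖^2 - 1) := fun i k =>
    ((hmeas i k).norm.pow_const 2).sub measurable_const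
  -- the dominating integrable function
  have hdom : Integrable (fun ω => 16*(1 + ‖v 0 0 ω‖^8)) P := by
    have h := ((integrable_const (1:ℝ)).add heighth).const_mul 16
    exact h.congr (ae_of_all _ fun ω => by simp)
  -- base integrability
  have hI2 : Integrable (fun ω => ‖v 0 0 ω‖^2) P :=
    hdom.mono' ((hmeas 0 0).norm.pow_const 2).aestronglyMeasurable
      (ae_of_all _ fun ω => by
        rw [Real.norm_eq_abs, abs_of_nonneg (by positivity)]
        exact dom_bound_sq _ (norm_nonneg _))
  have hI4 : Integrable (fun ω => ‖v 0 0 ω‖^4) P :=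
    hdom.mono' ((hmeas 0 0).norm.pow_const 4).aestronglyMeasurable
      (ae_of_all _ fun ω => by
        rw [Real.norm_eq_abs, abs_of_nonneg (by positivity)]
        exact dom_bound_fourth _ (norm_nonneg _))
  have hIbase1 : Integrable (fun ω => ‖v 0 0 ω‖^2 - 1) P :=
    hdom.mono' (hYmeas 0 0).aestronglyMeasurable
      (ae_of_all _ fun ω => by
        rw [Real.norm_eq_abs]
        exact dom_bound1 _ (norm_nonneg _))
  have hIbase2 : Integrable (fun ω => (‖v 0 0 ω‖^2 - 1)^2) P :=
    hdom.mono' ((hYmeas 0 0).pow_const 2).aestronglyMeasurable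
      (ae_of_all _ fun ω => by
        rw [Real.norm_eq_abs, abs_of_nonneg (by positivity)]
        exact dom_bound2 _ (norm_nonneg _))
  have hIbase4 : Integrable (fun ω => (‖v 0 0 ω‖^2 - 1)^4) P :=
    hdom.mono' ((hYmeas 0 0).pow_const 4).aestronglyMeasurable
      (ae_of_all _ fun ω => by
        rw [Real.norm_eq_abs, abs_of_nonneg (by positivity)]
        exact dom_bound4 _ (norm_nonneg _))
  -- identical distribution of the centered variables and their powers
  have hid1 : ∀ i k, IdentDistrib (fun ω => ‖v i k ω‖^2 - 1)
      (fun ω => ‖v 0 0 ω‖^2 - 1) P P := fun i k =>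
    (hident i k).comp ((measurable_norm.pow_const 2).sub measurable_const)
  have hid2 : ∀ i k, IdentDistrib (fun ω => (‖v i k ω‖^2 - 1)^2)
      (fun ω => (‖v 0 0 ω‖^2 - 1)^2) P P := fun i k =>
    (hident i k).comp (((measurable_norm.pow_const 2).sub measurable_const).pow_const 2)
  have hid4 : ∀ i k, IdentDistrib (fun ω => (‖v i k ω‖^2 - 1)^4)
      (fun ω => (‖v 0 0 ω‖^2 - 1)^4) P P := fun i k =>
    (hident i k).comp (((measurable_norm.pow_const 2).sub measurable_const).pow_const 4)
  -- base moments
  have hmean0 : ∫ ω, (‖v 0 0 ω‖^2 - 1) ∂P = 0 := by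
    rw [integral_sub hI2 (integrable_const 1), hvar, integral_const]
    simp
  have hm2base : ∫ ω, (‖v 0 0 ω‖^2 - 1)^2 ∂P = κ - 1 := by
    have hfe : (fun ω => (‖v 0 0 ω‖^2 - 1)^2)
        = fun ω => ‖v 0 0 ω‖^4 - (2*‖v 0 0 ω‖^2 - 1) := funext fun ω => by ring
    have hsub1 : Integrable (fun ω => 2*‖v 0 0 ω‖^2 - 1) P :=
      (hI2.const_mul 2).sub (integrable_const 1)
    rw [hfe, integral_sub hI4 hsub1,
      integral_sub (hI2.const_mul 2) (integrable_const 1), integral_const_mul, hvar,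
      integral_const, hκ]
    simp
    norm_num
  set m4 : ℝ := ∫ ω, (‖v 0 0 ω‖^2 - 1)^4 ∂P with hm4def
  have hm4nn : 0 ≤ m4 := integral_nonneg fun ω => by positivity
  -- transported moments and integrability
  have hYm1 : ∀ i k, ∫ ω, (‖v i k ω‖^2 - 1) ∂P = 0 := fun i k =>
    (hid1 i k).integral_eq.trans hmean0
  have hYm2 : ∀ i k, ∫ ω, (‖v i k ω‖^2 - 1)^2 ∂P = κ - 1 := fun i k =>
    (hid2 i k).integral_eq.trans hm2base
  have hYm4 : ∀ i k, ∫ ω, (‖v i k ω‖^2 - 1)^4 ∂P = m4 := fun i k =>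
    (hid4 i k).integral_eq
  have hYint2 : ∀ i k, Integrable (fun ω => (‖v i k ω‖^2 - 1)^2) P := fun i k =>
    (hid2 i k).integrable_iff.mpr hIbase2
  have hYint4 : ∀ i k, Integrable (fun ω => (‖v i k ω‖^2 - 1)^4) P := fun i k =>
    (hid4 i k).integrable_iff.mpr hIbase4
  -- pairwise independence within a column
  have hYpair : ∀ k i j, i ≠ j →
      IndepFun (fun ω => ‖v i k ω‖^2 - 1) (fun ω => ‖v j k ω‖^2 - 1) P := by
    intro k i j hij
    have hne : ((i,k) : ℕ × ℕ) ≠ (j,k) := by simp [Prod.ext_iff, hij]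
    exact (hindep.indepFun hne).comp
      ((measurable_norm.pow_const 2).sub measurable_const)
      ((measurable_norm.pow_const 2).sub measurable_const)
  -- per-column second and fourth moments of the centered sums
  have hSS2 : ∀ N k, ∫ ω, (∑ i ∈ Finset.range N, (‖v i k ω‖^2 - 1))^2 ∂P
      = N * (κ - 1) := fun N k =>
    second_moment_sum P (fun i ω => ‖v i k ω‖^2 - 1)
      (fun i => (hYmeas i k).aestronglyMeasurable) (fun i => hYint2 i k)
      (fun i => hYm1 i k) (κ - 1) (fun i => hYm2 i k)
      (fun i j hij => hYpair k i j hij) N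
  have hSS4 : ∀ N k, ∫ ω, (∑ i ∈ Finset.range N, (‖v i k ω‖^2 - 1))^4 ∂P
      ≤ 3 * (N:ℝ)^2 * m4 := fun N k =>
    fourth_moment_sum P (fun i ω => ‖v i k ω‖^2 - 1)
      (fun i => (hYmeas i k).aestronglyMeasurable) (fun i => hYint4 i k)
      (fun i => hYm1 i k) m4 (fun i => hYm4 i k)
      (fun i j l m hij hil him => indep_triple v hmeas hindep k i j l m hij hil him) N
  have hSS2int : ∀ N k,
      Integrable (fun ω => (∑ i ∈ Finset.range N, (‖v i k ω‖^2 - 1))^2) P := fun N k =>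
    integrable_sum_sq P (fun i ω => ‖v i k ω‖^2 - 1)
      (fun i => (hYmeas i k).aestronglyMeasurable) (fun i => hYint2 i k) N
  have hSS4int : ∀ N k,
      Integrable (fun ω => (∑ i ∈ Finset.range N, (‖v i k ω‖^2 - 1))^4) P := fun N k =>
    integrable_sum_pow4 P (fun i ω => ‖v i k ω‖^2 - 1)
      (fun i => (hYmeas i k).aestronglyMeasurable) (fun i => hYint4 i k) N
  -- the normalized squares Z N k
  set SS : ℕ → ℕ → Ω → ℝ := fun N k ω => ∑ i ∈ Finset.range N, (‖v i k ω‖^2 - 1) with hSSdef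
  set Z : ℕ → ℕ → Ω → ℝ := fun N k ω => (SS N k ω / N)^2 with hZdef
  have hSSmeas : ∀ N k, Measurable (SS N k) := fun N k =>
    Finset.measurable_sum _ fun i _ => hYmeas i k
  have hZmeas : ∀ N k, Measurable (Z N k) := fun N k =>
    ((hSSmeas N k).div_const _).pow_const 2
  have hZint : ∀ N k, Integrable (Z N k) P := by
    intro N k
    have he : Z N k = fun ω => (SS N k ω)^2 * (1/(N:ℝ)^2) := funext fun ω => by
      rw [hZdef]; ring
    rw [he]
    exact (hSS2int N k).mul_const _
  have hZ2int : ∀ N k, Integrable (fun ω => (Z N k ω)^2) P := by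
    intro N k
    have he : (fun ω => (Z N k ω)^2) = fun ω => (SS N k ω)^4 * (1/(N:ℝ)^4) :=
      funext fun ω => by rw [hZdef]; ring
    rw [he]
    exact (hSS4int N k).mul_const _
  have hZmean : ∀ N, 0 < N → ∀ k, ∫ ω, Z N k ω ∂P = (κ - 1)/N := by
    intro N hN k
    have hNR : (0:ℝ) < N := by exact_mod_cast hN
    have he : (fun ω => Z N k ω) = fun ω => (SS N k ω)^2 * (1/(N:ℝ)^2) :=
      funext fun ω => by rw [hZdef]; ring
    rw [he, integral_mul_const, hSS2 N k]
    field_simp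
  have hZ2bound : ∀ N, 0 < N → ∀ k, ∫ ω, (Z N k ω)^2 ∂P ≤ 3*m4/(N:ℝ)^2 := by
    intro N hN k
    have hNR : (0:ℝ) < N := by exact_mod_cast hN
    have he : (fun ω => (Z N k ω)^2) = fun ω => (SS N k ω)^4 * (1/(N:ℝ)^4) :=
      funext fun ω => by rw [hZdef]; ring
    rw [he, integral_mul_const]
    have h1 : (∫ ω, (SS N k ω)^4 ∂P) * (1/(N:ℝ)^4) ≤ (3 * (N:ℝ)^2 * m4) * (1/(N:ℝ)^4) :=
      mul_le_mul_of_nonneg_right (hSS4 N k) (by positivity)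
    refine h1.trans (le_of_eq ?_)
    field_simp
  -- the deterministic centering sequence
  set μf : ℕ → ℝ := fun N => ((κ - 1)/(N:ℝ)) * ∑ k ∈ Finset.range (K N), p N k with hμdef
  -- variance bound
  have hvar_bound : ∀ N : ℕ, 0 < N →
      Integrable (fun ω => (∑ k ∈ Finset.range (K N), p N k * Z N k ω - μf N)^2) P ∧
      ∫ ω, (∑ k ∈ Finset.range (K N), p N k * Z N k ω - μf N)^2 ∂P
        ≤ (K N : ℝ) * (Mbar^2 * (3*m4/(N:ℝ)^2)) := by
    intro N hN
    set a : ℝ := (κ - 1)/(N:ℝ) with hadef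
    set W : ℕ → Ω → ℝ := fun k ω => p N k * Z N k ω - p N k * a with hWdef
    have hWmeas : ∀ k, Measurable (W k) := fun k =>
      ((hZmeas N k).const_mul _).sub measurable_const
    have hWint : ∀ k, Integrable (W k) P := fun k =>
      ((hZint N k).const_mul _).sub (integrable_const _)
    have hWsq : ∀ k, Integrable (fun ω => (W k ω)^2) P := by
      intro k
      have he : (fun ω => (W k ω)^2) = fun ω =>
          (p N k)^2 * (Z N k ω)^2 - (2*(p N k)^2*a) * Z N k ω + (p N k * a)^2 :=
        funext fun ω => by rw [hWdef]; ring
      rw [he]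
      exact ((((hZ2int N k).const_mul _).sub ((hZint N k).const_mul _)).add
        (integrable_const _))
    have hWmean : ∀ k, ∫ ω, W k ω ∂P = 0 := by
      intro k
      have he : W k = fun ω => p N k * Z N k ω - p N k * a := rfl
      rw [he, integral_sub ((hZint N k).const_mul _) (integrable_const _),
        integral_const_mul, hZmean N hN k, integral_const]
      simp [hadef]
    have hWindep : ∀ k k', k ≠ k' → IndepFun (W k) (W k') P := by
      intro k k' hkk
      have hgm : ∀ k'' : ℕ, Measurable (fun x : Fin N → ℂ =>
          p N k'' * ((∑ i : Fin N, (‖x i‖^2 - 1))/(N:ℝ))^2 - p N k'' * a) := by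
        intro k''
        refine Measurable.sub ?_ measurable_const
        refine Measurable.const_mul ?_ _
        refine Measurable.pow_const ?_ 2
        refine Measurable.div_const ?_ _
        exact Finset.measurable_sum _ fun i _ =>
          ((measurable_pi_apply i).norm.pow_const 2).sub measurable_const
      have h0 := indep_columns v hmeas hindep N k k' hkk _ _ (hgm k) (hgm k')
      have he : ∀ k'' : ℕ, (fun ω =>
          p N k'' * ((∑ i : Fin N, (‖v i k'' ω‖^2 - 1))/(N:ℝ))^2 - p N k'' * a)
          = W k'' := by
        intro k''
        funext ω
        rw [hWdef, hZdef, hSSdef]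
        rw [Fin.sum_univ_eq_sum_range (fun j => ‖v j k'' ω‖^2 - 1) N]
      rw [he k, he k'] at h0
      exact h0
    have hsum_eq : ∀ ω, ∑ k ∈ Finset.range (K N), p N k * Z N k ω - μf N
        = ∑ k ∈ Finset.range (K N), W k ω := by
      intro ω
      rw [hμdef, hWdef]
      simp only []
      rw [Finset.mul_sum, ← Finset.sum_sub_distrib]
      exact Finset.sum_congr rfl fun k _ => by rw [hadef]; ring
    constructor
    · simp only [hsum_eq]
      exact integrable_sum_sq P W (fun k => (hWmeas k).aestronglyMeasurable) hWsq (K N)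
    · simp only [hsum_eq]
      refine var_sum_bound P W (fun k => (hWmeas k).aestronglyMeasurable) hWsq hWmean
        (K N) (Mbar^2 * (3*m4/(N:ℝ)^2)) ?_ hWindep
      intro k hk
      -- compute/bound the variance of each W k
      obtain ⟨hp0, hpM⟩ := hp N k hk
      have hpsq : (p N k)^2 ≤ Mbar^2 := by nlinarith
      have he : (fun ω => (W k ω)^2) = fun ω =>
          (p N k)^2 * ((Z N k ω)^2 - 2*a*Z N k ω + a^2) :=
        funext fun ω => by rw [hWdef]; ring
      have hint : Integrable (fun ω => (Z N k ω)^2 - 2*a*Z N k ω + a^2) P :=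
        ((hZ2int N k).sub ((hZint N k).const_mul _)).add (integrable_const _)
      have hval : ∫ ω, ((Z N k ω)^2 - 2*a*Z N k ω + a^2) ∂P
          = (∫ ω, (Z N k ω)^2 ∂P) - a^2 := by
        have i1 : Integrable (fun ω => (Z N k ω)^2 - 2*a*Z N k ω) P :=
          (hZ2int N k).sub ((hZint N k).const_mul _)
        rw [integral_add i1 (integrable_const _),
          integral_sub (hZ2int N k) ((hZint N k).const_mul _), integral_const_mul,
          hZmean N hN k, integral_const]
        simp [hadef]
        try ring
      rw [he, integral_const_mul, hval]
      have hZ2nn : 0 ≤ ∫ ω, (Z N k ω)^2 ∂P := integral_nonneg fun ω => by positivity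
      have hZ2b := hZ2bound N hN k
      nlinarith [sq_nonneg a, sq_nonneg Mbar, sq_nonneg (p N k)]
  -- limits of the deterministic sequences
  have hKinv : Tendsto (fun N => (K N : ℝ)/(N:ℝ)) atTop (𝓝 c⁻¹) := by
    have h := hK.inv₀ (ne_of_gt hc)
    exact h.congr fun N => by rw [inv_div]
  have hKev : ∀ᶠ N : ℕ in atTop, (0:ℝ) < (K N : ℝ)/(N:ℝ) :=
    hKinv.eventually (eventually_gt_nhds (by positivity))
  have hKne : ∀ᶠ N : ℕ in atTop, (K N : ℝ) ≠ 0 ∧ (0:ℝ) < (N:ℝ) := by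
    filter_upwards [hKev, eventually_gt_atTop 0] with N h1 h2
    constructor
    · intro h0
      rw [h0, zero_div] at h1
      exact lt_irrefl _ h1
    · exact_mod_cast h2
  have hμlim : Tendsto μf atTop (𝓝 ((κ - 1) * m1 / c)) := by
    have hT : Tendsto (fun N => (κ - 1) * ((K N : ℝ)/(N:ℝ))
        * ((1/(K N : ℝ)) * ∑ k ∈ Finset.range (K N), p N k)) atTop
        (𝓝 ((κ - 1) * c⁻¹ * m1)) :=
      ((tendsto_const_nhds.mul hKinv).mul hm1)
    have heq : ∀ᶠ N : ℕ in atTop, (κ - 1) * ((K N : ℝ)/(N:ℝ))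
        * ((1/(K N : ℝ)) * ∑ k ∈ Finset.range (K N), p N k) = μf N := by
      filter_upwards [hKne] with N ⟨h1, h2⟩
      rw [hμdef]
      field_simp
      try ring
    have h2 := hT.congr' heq
    have h3 : (κ - 1) * c⁻¹ * m1 = (κ - 1) * m1 / c := by
      field_simp
      try ring
    rwa [h3] at h2
  have hBlim : Tendsto (fun N : ℕ => (K N : ℝ) * (Mbar^2 * (3*m4/(N:ℝ)^2))) atTop (𝓝 0) := by
    have h := (hKinv.mul tendsto_one_div_atTop_nhds_zero_nat).const_mul (Mbar^2 * (3*m4))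
    simp only [mul_zero] at h
    refine h.congr fun N => ?_
    push_cast
    ring
  -- conclusion: Chebyshev
  rw [tendstoInMeasure_iff_dist]
  intro ε hε
  have hδ : (0:ℝ) < (ε/2)^2 := by positivity
  have hupper : Tendsto (fun N : ℕ =>
      ENNReal.ofReal (((K N : ℝ) * (Mbar^2 * (3*m4/(N:ℝ)^2)))/((ε/2)^2))) atTop (𝓝 0) := by
    have h := ENNReal.tendsto_ofReal (hBlim.div_const ((ε/2)^2))
    simpa using h
  refine tendsto_of_tendsto_of_tendsto_of_le_of_le' tendsto_const_nhds hupper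
    (Eventually.of_forall fun N => zero_le) ?_
  filter_upwards [eventually_gt_atTop 0,
    Metric.tendsto_nhds.mp hμlim (ε/2) (half_pos hε)] with N hN1 hNμ
  -- the random sum agrees with the `Z` version
  have hfeq : ∀ ω, ∑ k ∈ Finset.range (K N), p N k * (sNormSq v N k ω - 1)^2
      = ∑ k ∈ Finset.range (K N), p N k * Z N k ω := by
    intro ω
    refine Finset.sum_congr rfl fun k _ => ?_
    rw [sNormSq_sub_one v N k hN1 ω, hZdef, hSSdef]
  obtain ⟨hg2int, hg2bound⟩ := hvar_bound N hN1
  -- set inclusion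
  have hsubset : {ω | ε ≤ dist (∑ k ∈ Finset.range (K N),
        p N k * (sNormSq v N k ω - 1)^2) ((κ - 1) * m1 / c)}
      ⊆ {ω | (ε/2)^2 ≤ (∑ k ∈ Finset.range (K N), p N k * Z N k ω - μf N)^2} := by
    intro ω hω
    simp only [Set.mem_setOf_eq] at hω ⊢
    rw [Real.dist_eq, hfeq ω] at hω
    have htri : |∑ k ∈ Finset.range (K N), p N k * Z N k ω - (κ - 1) * m1 / c|
        ≤ |∑ k ∈ Finset.range (K N), p N k * Z N k ω - μf N|
          + |μf N - (κ - 1) * m1 / c| := abs_sub_le _ _ _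
    have hμc : |μf N - (κ - 1) * m1 / c| < ε/2 := by
      rw [← Real.dist_eq]
      exact hNμ
    have h2 : ε/2 ≤ |∑ k ∈ Finset.range (K N), p N k * Z N k ω - μf N| := by
      linarith
    calc (ε/2)^2 ≤ |∑ k ∈ Finset.range (K N), p N k * Z N k ω - μf N|^2 :=
        pow_le_pow_left₀ (by positivity) h2 2
      _ = (∑ k ∈ Finset.range (K N), p N k * Z N k ω - μf N)^2 := sq_abs _
  refine le_trans (measure_mono hsubset) ?_
  -- Markov's inequality
  have hmarkov := mul_meas_ge_le_integral_of_nonneg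
    (ae_of_all P fun ω => by positivity : 0 ≤ᵐ[P]
      fun ω => (∑ k ∈ Finset.range (K N), p N k * Z N k ω - μf N)^2)
    hg2int ((ε/2)^2)
  have htoReal : (P {ω | (ε/2)^2 ≤ (∑ k ∈ Finset.range (K N),
      p N k * Z N k ω - μf N)^2}).toReal
      ≤ ((K N : ℝ) * (Mbar^2 * (3*m4/(N:ℝ)^2)))/((ε/2)^2) := by
    rw [le_div_iff₀ hδ]
    calc (P {ω | (ε/2)^2 ≤ (∑ k ∈ Finset.range (K N),
          p N k * Z N k ω - μf N)^2}).toReal * (ε/2)^2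
        = (ε/2)^2 * (P {ω | (ε/2)^2 ≤ (∑ k ∈ Finset.range (K N),
          p N k * Z N k ω - μf N)^2}).toReal := by ring
      _ ≤ ∫ ω, (∑ k ∈ Finset.range (K N), p N k * Z N k ω - μf N)^2 ∂P := hmarkov
      _ ≤ (K N : ℝ) * (Mbar^2 * (3*m4/(N:ℝ)^2)) := hg2bound
  calc P {ω | (ε/2)^2 ≤ (∑ k ∈ Finset.range (K N), p N k * Z N k ω - μf N)^2}
      = ENNReal.ofReal ((P {ω | (ε/2)^2 ≤ (∑ k ∈ Finset.range (K N),
        p N k * Z N k ω - μf N)^2}).toReal) :=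
        (ENNReal.ofReal_toReal (measure_ne_top _ _)).symm
    _ ≤ ENNReal.ofReal (((K N : ℝ) * (Mbar^2 * (3*m4/(N:ℝ)^2)))/((ε/2)^2)) :=
        ENNReal.ofReal_le_ofReal htoReal

end
end

section
/- Let c ∈ ℂ, let r ≥ 1 be an integer, and let 0 < ρ < 1. Then (1/(2πi)) ∮_{|w|=ρ} (c + (1−c)w)^r / ( w^{r+2} (1−w)^r ) dw = ∑_{j=0}^{r} binom(r,j) (1−c)^j c^{r−j} binom(2r−j, r−1), where the integral is over the circle of radius ρ centered at 0, traversed once counterclockwise. -/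
open Finset
open scoped BigOperators Real

noncomputable section

open Metric Complex

private lemma one_sub_ne_zero_of_mem_closedBall {ρ : ℝ} (hρ1 : ρ < 1) {w : ℂ}
    (hw : w ∈ closedBall (0:ℂ) ρ) : (1 : ℂ) - w ≠ 0 := by
  intro h
  have hw1 : w = 1 := by linear_combination -h
  rw [mem_closedBall, dist_zero_right, hw1] at hw
  simp at hw
  linarith

private lemma sphere_ne {ρ : ℝ} (hρ0 : 0 < ρ) (hρ1 : ρ < 1) {w : ℂ}
    (hw : w ∈ sphere (0:ℂ) ρ) : w ≠ 0 ∧ (1:ℂ) - w ≠ 0 := by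
  rw [mem_sphere, dist_zero_right] at hw
  constructor
  · intro h; rw [h] at hw; simp at hw; linarith
  · intro h
    have hw1 : w = 1 := by linear_combination -h
    rw [hw1] at hw; simp at hw; linarith

/-- integrability of `w^a * (1-w)^b` on the circle -/
private lemma aux_integrable {ρ : ℝ} (hρ0 : 0 < ρ) (hρ1 : ρ < 1) (a b : ℤ) (k : ℂ) :
    CircleIntegrable (fun w : ℂ => k * (w ^ a * (1 - w) ^ b)) 0 ρ := by
  apply ContinuousOn.circleIntegrable hρ0.le
  intro w hw
  obtain ⟨h0, h1⟩ := sphere_ne hρ0 hρ1 hw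
  have : DifferentiableAt ℂ (fun w : ℂ => k * (w ^ a * (1 - w) ^ b)) w := by
    apply DifferentiableAt.const_mul
    exact ((differentiableAt_fun_id.zpow (Or.inl h0)).mul
      (((differentiableAt_const (1:ℂ)).sub differentiableAt_fun_id).zpow (Or.inl h1)))
  exact this.continuousAt.continuousWithinAt

private lemma circleIntegral_add' {f g : ℂ → ℂ} {c : ℂ} {R : ℝ}
    (hf : CircleIntegrable f c R) (hg : CircleIntegrable g c R) :
    (∮ w in C(c, R), (f w + g w)) = (∮ w in C(c, R), f w) + ∮ w in C(c, R), g w := by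
  simp only [circleIntegral, smul_add]
  exact intervalIntegral.integral_add hf.out hg.out

private lemma circleIntegral_finset_sum {ι : Type*} (s : Finset ι) {f : ι → ℂ → ℂ} {c : ℂ} {R : ℝ}
    (h : ∀ i ∈ s, CircleIntegrable (f i) c R) :
    (∮ w in C(c, R), (∑ i ∈ s, f i w)) = ∑ i ∈ s, ∮ w in C(c, R), f i w := by
  simp only [circleIntegral, smul_sum]
  exact intervalIntegral.integral_finset_sum fun i hi => (h i hi).out

/-- `∮ (1-w)^(-i) = 0` -/
private lemma aux_zero {ρ : ℝ} (hρ0 : 0 < ρ) (hρ1 : ρ < 1) (i : ℕ) :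
    (∮ w in C(0, ρ), (1 - w) ^ (-(i:ℤ))) = 0 := by
  have hd : ∀ w ∈ closedBall (0:ℂ) ρ, DifferentiableAt ℂ (fun w : ℂ => (1 - w) ^ (-(i:ℤ))) w := by
    intro w hw
    exact ((differentiableAt_const (1:ℂ)).sub differentiableAt_fun_id).zpow
      (Or.inl (one_sub_ne_zero_of_mem_closedBall hρ1 hw))
  apply Complex.circleIntegral_eq_zero_of_differentiable_on_off_countable hρ0.le
    Set.countable_empty
  · exact fun w hw => (hd w hw).continuousAt.continuousWithinAt
  · exact fun w hw => hd w (ball_subset_closedBall hw.1)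

/-- the key integral: `(∮ w^(-(n+1)) (1-w)^(-i)) = 2πi * C(n+i-1, n)` -/
private lemma aux_J {ρ : ℝ} (hρ0 : 0 < ρ) (hρ1 : ρ < 1) (n i : ℕ) :
    (∮ w in C(0, ρ), w ^ (-(n:ℤ) - 1) * (1 - w) ^ (-(i:ℤ)))
      = (2 * Real.pi * Complex.I) * ((n + i - 1).choose n : ℂ) := by
  induction n generalizing i with
  | zero =>
    induction i with
    | zero =>
      have he : Set.EqOn (fun w : ℂ => w ^ (-((0:ℕ):ℤ) - 1) * (1 - w) ^ (-((0:ℕ):ℤ)))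
          (fun w : ℂ => (w - 0)⁻¹) (sphere (0:ℂ) ρ) := by
        intro w _; simp [zpow_neg]
      rw [circleIntegral.integral_congr hρ0.le he,
        circleIntegral.integral_sub_center_inv 0 hρ0.ne']
      simp
    | succ i ih =>
      have he : Set.EqOn (fun w : ℂ => w ^ (-((0:ℕ):ℤ) - 1) * (1 - w) ^ (-((i+1:ℕ):ℤ)))
          (fun w : ℂ => w ^ (-((0:ℕ):ℤ) - 1) * (1 - w) ^ (-(i:ℤ)) + (1 - w) ^ (-((i+1:ℕ):ℤ)))
          (sphere (0:ℂ) ρ) := by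
        intro w hw
        obtain ⟨h0, h1⟩ := sphere_ne hρ0 hρ1 hw
        have key : (1 - w) ^ (-(i:ℤ)) = (1 - w) ^ (-((i+1:ℕ):ℤ)) * (1 - w) := by
          rw [show (-(i:ℤ)) = (-((i+1:ℕ):ℤ)) + 1 by push_cast; ring, zpow_add₀ h1, zpow_one]
        simp only [key]
        field_simp
        have hinv : w ^ (-((0:ℕ):ℤ) - 1) * w = 1 := by simp [h0]
        linear_combination hinv
      rw [circleIntegral.integral_congr hρ0.le he,
        circleIntegral_add' (by simpa using aux_integrable hρ0 hρ1 (-(0:ℤ)-1) (-(i:ℤ)) 1)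
          (by simpa using aux_integrable hρ0 hρ1 0 (-((i+1:ℕ):ℤ)) 1),
        ih, aux_zero hρ0 hρ1 (i+1)]
      simp
  | succ n ihn =>
    induction i with
    | zero =>
      have he : Set.EqOn (fun w : ℂ => w ^ (-((n+1:ℕ):ℤ) - 1) * (1 - w) ^ (-((0:ℕ):ℤ)))
          (fun w : ℂ => (w - 0) ^ (-((n+1:ℕ):ℤ) - 1)) (sphere (0:ℂ) ρ) := by
        intro w _; simp
      rw [circleIntegral.integral_congr hρ0.le he,
        circleIntegral.integral_sub_zpow_of_ne (by omega) 0 0 ρ]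
      have : (n + 1 + 0 - 1).choose (n + 1) = 0 := Nat.choose_eq_zero_of_lt (by omega)
      rw [this]
      simp
    | succ i ih =>
      have he : Set.EqOn (fun w : ℂ => w ^ (-((n+1:ℕ):ℤ) - 1) * (1 - w) ^ (-((i+1:ℕ):ℤ)))
          (fun w : ℂ => w ^ (-((n+1:ℕ):ℤ) - 1) * (1 - w) ^ (-(i:ℤ))
            + w ^ (-(n:ℤ) - 1) * (1 - w) ^ (-((i+1:ℕ):ℤ))) (sphere (0:ℂ) ρ) := by
        intro w hw
        obtain ⟨h0, h1⟩ := sphere_ne hρ0 hρ1 hw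
        have key1 : (1 - w) ^ (-(i:ℤ)) = (1 - w) ^ (-((i+1:ℕ):ℤ)) * (1 - w) := by
          rw [show (-(i:ℤ)) = (-((i+1:ℕ):ℤ)) + 1 by push_cast; ring, zpow_add₀ h1, zpow_one]
        have key2 : w ^ (-(n:ℤ) - 1) = w ^ (-((n+1:ℕ):ℤ) - 1) * w := by
          rw [show (-(n:ℤ) - 1) = (-((n+1:ℕ):ℤ) - 1) + 1 by push_cast; ring,
            zpow_add₀ h0, zpow_one]
        simp only [key1, key2]
        ring
      rw [circleIntegral.integral_congr hρ0.le he,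
        circleIntegral_add' (by simpa using aux_integrable hρ0 hρ1 (-((n+1:ℕ):ℤ)-1) (-(i:ℤ)) 1)
          (by simpa using aux_integrable hρ0 hρ1 (-(n:ℤ)-1) (-((i+1:ℕ):ℤ)) 1),
        ih, ihn (i+1)]
      have harith : (n + 1 + (i + 1) - 1).choose (n + 1)
          = (n + 1 + i - 1).choose (n + 1) + (n + (i + 1) - 1).choose n := by
        have e1 : n + 1 + (i + 1) - 1 = (n + i) + 1 := by omega
        have e2 : n + 1 + i - 1 = n + i := by omega
        have e3 : n + (i + 1) - 1 = n + i := by omega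
        rw [e1, e2, e3, Nat.choose_succ_succ (n + i) n, Nat.add_comm]
      rw [harith]
      push_cast
      ring

/-- The residue computation for the contour integral `ν₁` in the proof of
formula (1.23) of the paper:
`(1/(2πi)) ∮_{|w|=ρ} (c+(1−c)w)^r /(w^{r+2}(1−w)^r) dw
  = ∑_{j=0}^r C(r,j)(1−c)^j c^{r−j} C(2r−j, r−1)`. -/
theorem contour_integral_nu_one (c : ℂ) (r : ℕ) (hr : 1 ≤ r) (ρ : ℝ)
    (hρ0 : 0 < ρ) (hρ1 : ρ < 1) :
    (2 * Real.pi * Complex.I)⁻¹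
        * (∮ w in C(0, ρ), (c + (1 - c) * w)^r / (w^(r + 2) * (1 - w)^r))
      = ∑ j ∈ Finset.range (r + 1),
          (r.choose j : ℂ) * (1 - c)^j * c^(r - j)
            * ((2 * r - j).choose (r - 1) : ℂ) := by
  have hEq : Set.EqOn (fun w : ℂ => (c + (1 - c) * w)^r / (w^(r + 2) * (1 - w)^r))
      (fun w : ℂ => ∑ j ∈ Finset.range (r + 1),
        ((r.choose j : ℂ) * (1 - c)^j * c^(r - j))
          * (w ^ (-((r + 1 - j : ℕ) : ℤ) - 1) * (1 - w) ^ (-(r : ℤ))))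
      (sphere (0:ℂ) ρ) := by
    intro w hw
    obtain ⟨h0, h1⟩ := sphere_ne hρ0 hρ1 hw
    simp only
    rw [add_comm c ((1 - c) * w), add_pow, Finset.sum_div]
    refine Finset.sum_congr rfl fun j hj => ?_
    have hj' : j ≤ r := by simpa [Nat.lt_succ_iff] using hj
    have eidx : (-((r + 1 - j : ℕ) : ℤ) - 1) = (j : ℤ) - ((r : ℤ) + 2) := by
      push_cast [Nat.cast_sub (show j ≤ r + 1 by omega)]
      ring
    have e : w ^ ((j : ℤ) - ((r : ℤ) + 2)) = w ^ (j : ℕ) / w ^ (r + 2) := by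
      rw [zpow_sub₀ h0, zpow_natCast,
        show ((r : ℤ) + 2) = ((r + 2 : ℕ) : ℤ) by norm_cast, zpow_natCast]
    have eneg : (1 - w) ^ (-(r : ℤ)) = ((1 - w) ^ (r : ℕ))⁻¹ := by
      rw [zpow_neg, zpow_natCast]
    rw [eidx, e, eneg, mul_pow]
    have hwp : w ^ (r + 2) ≠ 0 := pow_ne_zero _ h0
    have hwp1 : (1 - w) ^ r ≠ 0 := pow_ne_zero _ h1
    field_simp
  rw [circleIntegral.integral_congr hρ0.le hEq,
    circleIntegral_finset_sum _ (fun j _ => aux_integrable hρ0 hρ1 _ _ _)]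
  have hterm : ∀ j ∈ Finset.range (r + 1),
      (∮ w in C(0, ρ), ((r.choose j : ℂ) * (1 - c)^j * c^(r - j))
          * (w ^ (-((r + 1 - j : ℕ) : ℤ) - 1) * (1 - w) ^ (-(r : ℤ))))
        = ((r.choose j : ℂ) * (1 - c)^j * c^(r - j))
          * ((2 * Real.pi * Complex.I) * (((r + 1 - j) + r - 1).choose (r + 1 - j) : ℂ)) := by
    intro j _
    rw [circleIntegral.integral_const_mul, aux_J hρ0 hρ1 (r + 1 - j) r]
  rw [Finset.sum_congr rfl hterm, Finset.mul_sum]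
  refine Finset.sum_congr rfl fun j hj => ?_
  have hj' : j ≤ r := by simpa [Nat.lt_succ_iff] using hj
  have hC : ((r + 1 - j) + r - 1).choose (r + 1 - j) = (2 * r - j).choose (r - 1) := by
    have h1 : (r + 1 - j) + r - 1 = 2 * r - j := by omega
    have h2 : r + 1 - j = (2 * r - j) - (r - 1) := by omega
    rw [h1, h2, Nat.choose_symm (by omega)]
  rw [hC]
  have h2pi : (2 * (Real.pi:ℂ) * Complex.I) ≠ 0 := Complex.two_pi_I_ne_zero
  field_simp

end
end
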